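/- arXiv:1012.5457 — 4 statements merged into one kernel-verified Lean document; each statement's English description precedes it below -/
import Mathlib

section
/- Let X be a real-valued random variable whose distribution has a log-concave density f with respect to Lebesgue measure on ℝ. Then for every t > 0, P{ |log f(X) − E[log f(X)]| ≥ t } ≤ 4·e^{−t/2}. -/
open MeasureTheory ProbabilityTheory Set
open scoped ENNReal

private lemma midpoint_lb (f : ℝ → ℝ) (hf0 : ∀ x, 0 ≤ f x)
    (hlc : ∀ x y : ℝ, ∀ l : ℝ, 0 ≤ l → l ≤ 1 →
      f x ^ l * f y ^ (1 - l) ≤ f (l * x + (1 - l) * y))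
    {a b c₁ c₂ : ℝ} (h1 : 0 ≤ c₁) (h2 : 0 ≤ c₂) (ha : c₁ ≤ f a) (hb : c₂ ≤ f b) :
    Real.sqrt (c₁ * c₂) ≤ f ((a + b) / 2) := by
  have h := hlc a b 2⁻¹ (by norm_num) (by norm_num)
  norm_num at h
  rw [show (1:ℝ)/2 * a + 1/2 * b = (a + b) / 2 by ring] at h
  calc Real.sqrt (c₁ * c₂) = c₁ ^ ((1:ℝ)/2) * c₂ ^ ((1:ℝ)/2) := by
        rw [Real.sqrt_mul h1, Real.sqrt_eq_rpow, Real.sqrt_eq_rpow]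
    _ ≤ f a ^ ((1:ℝ)/2) * f b ^ ((1:ℝ)/2) := by
        apply mul_le_mul (Real.rpow_le_rpow h1 ha (by norm_num))
          (Real.rpow_le_rpow h2 hb (by norm_num))
          (Real.rpow_nonneg h2 _) (Real.rpow_nonneg (h1.trans ha) _)
    _ ≤ _ := h

private lemma segment_lb (f : ℝ → ℝ) (hf0 : ∀ x, 0 ≤ f x)
    (hlc : ∀ x y : ℝ, ∀ l : ℝ, 0 ≤ l → l ≤ 1 →
      f x ^ l * f y ^ (1 - l) ≤ f (l * x + (1 - l) * y))
    {a b c : ℝ} (hc : 0 ≤ c) (ha : c ≤ f a) (hb : c ≤ f b) :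
    ∀ y ∈ uIcc a b, c ≤ f y := by
  intro y hy
  rw [← segment_eq_uIcc] at hy
  rcases hy with ⟨l, m, hl, hm, hlm, rfl⟩
  rcases eq_or_lt_of_le hc with rfl | hc'
  · exact hf0 _
  have hm' : m = 1 - l := by linarith
  subst hm'
  have h := hlc a b l hl (by linarith)
  simp only [smul_eq_mul]
  refine le_trans ?_ h
  calc c = c ^ l * c ^ (1 - l) := by
        rw [← Real.rpow_add hc', add_sub_cancel, Real.rpow_one]
    _ ≤ f a ^ l * f b ^ (1 - l) :=
        mul_le_mul (Real.rpow_le_rpow hc ha hl) (Real.rpow_le_rpow hc hb (by linarith))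
          (Real.rpow_nonneg hc _) (Real.rpow_nonneg (hc.trans ha) _)

private lemma anchor (f : ℝ → ℝ) (hf0 : ∀ x, 0 ≤ f x) (hfm : Measurable f)
    (hlc : ∀ x y : ℝ, ∀ l : ℝ, 0 ≤ l → l ≤ 1 →
      f x ^ l * f y ^ (1 - l) ≤ f (l * x + (1 - l) * y))
    (hint : ∫⁻ x, ENNReal.ofReal (f x) = 1)
    {p x c : ℝ} (hc : 0 < c) (hp : c ≤ f p) (hx : c ≤ f x) :
    |x - p| / 2 * Real.sqrt (c * f x) ≤ 1 := by
  set m₁ := (p + x) / 2 with hm₁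
  have hmid : Real.sqrt (c * f x) ≤ f m₁ :=
    midpoint_lb f hf0 hlc hc.le (hc.le.trans hx) hp le_rfl
  have hseg : ∀ y ∈ uIcc m₁ x, Real.sqrt (c * f x) ≤ f y := by
    apply segment_lb f hf0 hlc (Real.sqrt_nonneg _) hmid
    calc Real.sqrt (c * f x) ≤ Real.sqrt (f x * f x) := by
          apply Real.sqrt_le_sqrt; nlinarith
      _ = f x := by rw [Real.sqrt_mul_self (hc.le.trans hx)]
  have hlow : ENNReal.ofReal (|x - m₁|) * ENNReal.ofReal (Real.sqrt (c * f x)) ≤ 1 := by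
    calc ENNReal.ofReal (|x - m₁|) * ENNReal.ofReal (Real.sqrt (c * f x))
        = ∫⁻ _ in uIcc m₁ x, ENNReal.ofReal (Real.sqrt (c * f x)) := by
          rw [setLIntegral_const, Real.volume_interval, mul_comm]
      _ ≤ ∫⁻ y in uIcc m₁ x, ENNReal.ofReal (f y) := by
          apply setLIntegral_mono (hfm.ennreal_ofReal)
          exact fun y hy => ENNReal.ofReal_le_ofReal (hseg y hy)
      _ ≤ ∫⁻ y, ENNReal.ofReal (f y) := setLIntegral_le_lintegral _ _
      _ = 1 := hint
  have habs : |x - m₁| = |x - p| / 2 := by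
    rw [hm₁, show x - (p + x)/2 = (x - p)/2 by ring, abs_div]
    norm_num
  rw [habs, abs_sub_comm] at hlow
  rw [← ENNReal.ofReal_mul (by positivity)] at hlow
  have := ENNReal.ofReal_le_one.mp (by simpa using hlow)
  rwa [abs_sub_comm] at this

private lemma two_points (f : ℝ → ℝ) (hf0 : ∀ x, 0 ≤ f x) (hfm : Measurable f)
    (hint : ∫⁻ x, ENNReal.ofReal (f x) = 1) :
    ∃ p q : ℝ, p ≠ q ∧ 0 < f p ∧ 0 < f q := by
  by_contra h
  push_neg at h
  have hsub : {x : ℝ | 0 < f x}.Subsingleton := by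
    intro a ha b hb
    by_contra hne
    exact absurd (h a b hne ha) hb.not_ge
  have hz : volume {x : ℝ | 0 < f x} = 0 := hsub.measure_zero _
  have : (fun x => ENNReal.ofReal (f x)) =ᵐ[volume] 0 := by
    rw [Filter.EventuallyEq, ae_iff]
    refine measure_mono_null ?_ hz
    intro x hx
    simp only [Pi.zero_apply] at hx
    have : 0 < f x := by
      by_contra hfx
      exact hx (by simp [ENNReal.ofReal_eq_zero.mpr (le_of_not_gt hfx)])
    exact this
  rw [lintegral_congr_ae this] at hint
  simp at hint

private lemma f_bddAbove (f : ℝ → ℝ) (hf0 : ∀ x, 0 ≤ f x) (hfm : Measurable f)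
    (hlc : ∀ x y : ℝ, ∀ l : ℝ, 0 ≤ l → l ≤ 1 →
      f x ^ l * f y ^ (1 - l) ≤ f (l * x + (1 - l) * y))
    (hint : ∫⁻ x, ENNReal.ofReal (f x) = 1) :
    BddAbove (Set.range f) := by
  obtain ⟨p, q, hpq, hp, hq⟩ := two_points f hf0 hfm hint
  set c := min (f p) (f q) with hcdef
  have hc : 0 < c := lt_min hp hq
  set d := |q - p| with hd
  have hd0 : 0 < d := by simpa [hd, abs_pos, sub_ne_zero] using hpq.symm
  refine ⟨max c (16 / (d ^ 2 * c)), ?_⟩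
  rintro _ ⟨x, rfl⟩
  rcases le_or_gt (f x) c with h | h
  · exact h.trans (le_max_left _ _)
  refine le_trans ?_ (le_max_right _ _)
  -- pick an anchor at distance ≥ d/2
  obtain ⟨r, hr, hrd⟩ : ∃ r : ℝ, c ≤ f r ∧ d / 2 ≤ |x - r| := by
    rcases le_or_gt (d / 2) (|x - p|) with h' | h'
    · exact ⟨p, min_le_left _ _, h'⟩
    · refine ⟨q, min_le_right _ _, ?_⟩
      have : |q - p| ≤ |x - p| + |x - q| := by
        calc |q - p| = |(x - p) - (x - q)| := by ring_nf
          _ ≤ |x - p| + |x - q| := abs_sub _ _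
      linarith
  have key := anchor f hf0 hfm hlc hint hc hr h.le
  -- |x - r|/2 * sqrt (c * f x) ≤ 1 and |x - r| ≥ d/2
  have hsq : Real.sqrt (c * f x) ≤ 4 / d := by
    have h1 : d / 2 / 2 * Real.sqrt (c * f x) ≤ 1 := by
      refine le_trans ?_ key
      exact mul_le_mul_of_nonneg_right (by linarith) (Real.sqrt_nonneg _)
    rw [le_div_iff₀ (by positivity)]
    nlinarith [Real.sqrt_nonneg (c * f x)]
  have hsq2 : c * f x ≤ (4 / d) ^ 2 := by
    have := Real.sq_sqrt (mul_nonneg hc.le (hf0 x))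
    nlinarith [Real.sqrt_nonneg (c * f x)]
  have h4 : (4 / d) ^ 2 * d ^ 2 = 16 := by field_simp; norm_num
  rw [le_div_iff₀ (mul_pos (pow_pos hd0 2) hc)]
  nlinarith [mul_le_mul_of_nonneg_right hsq2 (sq_nonneg d)]

private lemma doubling (f : ℝ → ℝ) (hf0 : ∀ x, 0 ≤ f x)
    (hlc : ∀ x y : ℝ, ∀ l : ℝ, 0 ≤ l → l ≤ 1 →
      f x ^ l * f y ^ (1 - l) ≤ f (l * x + (1 - l) * y))
    {c : ℝ} (hc : 0 < c) {x₀ : ℝ} (hx₀ : c ≤ f x₀) {t : ℝ} (ht : 0 < t) :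
    volume {x | t < Real.sqrt (f x)} ≤ 2 * volume {x | t * Real.sqrt c ≤ f x} := by
  have hsub : {x | t < Real.sqrt (f x)} ⊆
      (fun u => 2⁻¹ * (u + x₀)) ⁻¹' {x | t * Real.sqrt c ≤ f x} := by
    intro x hx
    simp only [mem_setOf_eq, mem_preimage] at *
    have h1 : t ^ 2 ≤ f x := by
      nlinarith [Real.sq_sqrt (hf0 x), Real.sqrt_nonneg (f x)]
    have h2 := midpoint_lb f hf0 hlc (sq_nonneg t) hc.le h1 hx₀
    rw [show (2⁻¹ : ℝ) * (x + x₀) = (x + x₀) / 2 by ring]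
    calc t * Real.sqrt c = Real.sqrt (t ^ 2 * c) := by
          rw [Real.sqrt_mul (sq_nonneg t), Real.sqrt_sq ht.le]
      _ ≤ f ((x + x₀) / 2) := h2
  calc volume {x | t < Real.sqrt (f x)}
      ≤ volume ((fun u => 2⁻¹ * (u + x₀)) ⁻¹' {x | t * Real.sqrt c ≤ f x}) :=
        measure_mono hsub
    _ = 2 * volume {x | t * Real.sqrt c ≤ f x} := by
        have : (fun u : ℝ => 2⁻¹ * (u + x₀)) = (fun v => (2⁻¹ : ℝ) * v) ∘ (fun u => u + x₀) := rfl
        rw [this, Set.preimage_comp]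
        rw [measure_preimage_add_right volume x₀ _]
        rw [Real.volume_preimage_mul_left (by norm_num : (2⁻¹ : ℝ) ≠ 0)]
        norm_num

private lemma key_ineq (f : ℝ → ℝ) (hf0 : ∀ x, 0 ≤ f x) (hfm : Measurable f)
    (hlc : ∀ x y : ℝ, ∀ l : ℝ, 0 ≤ l → l ≤ 1 →
      f x ^ l * f y ^ (1 - l) ≤ f (l * x + (1 - l) * y))
    (hint : ∫⁻ x, ENNReal.ofReal (f x) = 1)
    {c : ℝ} (hc : 0 < c) {x₀ : ℝ} (hx₀ : c ≤ f x₀) :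
    ENNReal.ofReal (Real.sqrt c) * ∫⁻ x, ENNReal.ofReal (Real.sqrt (f x)) ≤ 2 := by
  set a := Real.sqrt c with ha
  have ha0 : 0 < a := Real.sqrt_pos.mpr hc
  set g : ℝ → ℝ≥0∞ := fun s => volume {x | s ≤ f x} with hg
  have hgm : Measurable g :=
    Antitone.measurable fun s t hst => measure_mono fun x hx => le_trans hst hx
  have hsqm : Measurable fun x => Real.sqrt (f x) := Real.continuous_sqrt.measurable.comp hfm
  have layS : ∫⁻ x, ENNReal.ofReal (Real.sqrt (f x))
      = ∫⁻ t in Ioi 0, volume {x | t < Real.sqrt (f x)} :=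
    lintegral_eq_lintegral_meas_lt volume (Filter.Eventually.of_forall fun x => Real.sqrt_nonneg _)
      hsqm.aemeasurable
  have layF : ∫⁻ s in Ioi 0, g s = 1 := by
    rw [← lintegral_eq_lintegral_meas_le volume (Filter.Eventually.of_forall hf0) hfm.aemeasurable]
    exact hint
  -- substitution s = a * t
  have hmap : ∫⁻ t in Ioi 0, g (a * t) = ENNReal.ofReal a⁻¹ * ∫⁻ s in Ioi 0, g s := by
    have h1 : ∫⁻ s in Ioi 0, g s ∂(Measure.map (fun t => a * t) volume)
        = ∫⁻ t in (fun t => a * t) ⁻¹' (Ioi 0), g (a * t) := by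
      exact setLIntegral_map measurableSet_Ioi hgm (measurable_const_mul a)
    have h2 : (fun t : ℝ => a * t) ⁻¹' (Ioi 0) = Ioi 0 := by
      ext t; simp only [mem_preimage, mem_Ioi]
      constructor
      · intro h; by_contra h'; push_neg at h'; nlinarith
      · intro h; positivity
    rw [h2] at h1
    rw [← h1, Real.map_volume_mul_left ha0.ne', abs_of_pos (inv_pos.mpr ha0),
      Measure.restrict_smul, lintegral_smul_measure, smul_eq_mul]
  have hdbl : ∫⁻ t in Ioi 0, volume {x | t < Real.sqrt (f x)}
      ≤ ∫⁻ t in Ioi 0, 2 * g (a * t) := by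
    apply setLIntegral_mono (by fun_prop)
    intro t ht
    have := doubling f hf0 hlc hc hx₀ (show (0:ℝ) < t from ht)
    rw [← ha] at this
    simpa [hg, mul_comm t a] using this
  calc ENNReal.ofReal a * ∫⁻ x, ENNReal.ofReal (Real.sqrt (f x))
      ≤ ENNReal.ofReal a * ∫⁻ t in Ioi 0, 2 * g (a * t) := by
        rw [layS]; exact mul_le_mul_right hdbl _
    _ = ENNReal.ofReal a * (2 * (ENNReal.ofReal a⁻¹ * 1)) := by
        rw [lintegral_const_mul 2 (by fun_prop), hmap, layF]
    _ = 2 * (ENNReal.ofReal a * ENNReal.ofReal a⁻¹) := by ring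
    _ = 2 := by
        rw [← ENNReal.ofReal_mul ha0.le, mul_inv_cancel₀ ha0.ne', ENNReal.ofReal_one, mul_one]



private lemma key_M (f : ℝ → ℝ) (hf0 : ∀ x, 0 ≤ f x) (hfm : Measurable f)
    (hlc : ∀ x y : ℝ, ∀ l : ℝ, 0 ≤ l → l ≤ 1 →
      f x ^ l * f y ^ (1 - l) ≤ f (l * x + (1 - l) * y))
    (hint : ∫⁻ x, ENNReal.ofReal (f x) = 1) :
    0 < sSup (Set.range f) ∧
      ENNReal.ofReal (Real.sqrt (sSup (Set.range f)))
        * ∫⁻ x, ENNReal.ofReal (Real.sqrt (f x)) ≤ 2 := by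
  set M := sSup (Set.range f) with hM
  set K := ∫⁻ x, ENNReal.ofReal (Real.sqrt (f x)) with hK
  have hbdd := f_bddAbove f hf0 hfm hlc hint
  obtain ⟨p, q, hpq, hp, hq⟩ := two_points f hf0 hfm hint
  have hMpos : 0 < M := lt_of_lt_of_le hp (le_csSup hbdd ⟨p, rfl⟩)
  refine ⟨hMpos, ?_⟩
  have hKc : ∀ c : ℝ, 0 < c → c < M → ENNReal.ofReal (Real.sqrt c) * K ≤ 2 := by
    intro c hc hcM
    obtain ⟨_, ⟨x₀, rfl⟩, hx₀⟩ := exists_lt_of_lt_csSup (Set.range_nonempty f) hcM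
    exact key_ineq f hf0 hfm hlc hint hc hx₀.le
  have hKfin : K ≠ ⊤ := by
    intro hfin
    have h := hKc (M / 2) (by linarith) (by linarith)
    rw [hfin, ENNReal.mul_top] at h
    · exact absurd h (by simp)
    · simp only [ne_eq, ENNReal.ofReal_eq_zero, not_le]
      exact Real.sqrt_pos.mpr (by linarith)
  set k := K.toReal with hk
  have hk0 : 0 ≤ k := ENNReal.toReal_nonneg
  have hreal : ∀ c : ℝ, 0 < c → c < M → Real.sqrt c * k ≤ 2 := by
    intro c hc hcM
    have h := hKc c hc hcM
    rw [← ENNReal.ofReal_toReal hKfin, ← ENNReal.ofReal_mul (Real.sqrt_nonneg _),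
      show (2 : ℝ≥0∞) = ENNReal.ofReal 2 by norm_num] at h
    exact (ENNReal.ofReal_le_ofReal_iff (by norm_num)).mp h
  have hgoal : Real.sqrt M * k ≤ 2 := by
    by_contra hcon
    push_neg at hcon
    have hkpos : 0 < k := by
      rcases hk0.lt_or_eq with h | h
      · exact h
      · rw [← h] at hcon; simp at hcon; nlinarith [Real.sqrt_nonneg M]
    have hMgt : (2 / k) ^ 2 < M := by
      have h1 : 2 / k < Real.sqrt M := by
        rw [div_lt_iff₀ hkpos]; linarith
      have h2 := Real.sq_sqrt hMpos.le
      calc (2 / k) ^ 2 < Real.sqrt M ^ 2 := by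
            exact pow_lt_pow_left₀ h1 (by positivity) (by norm_num)
        _ = M := h2
    set c := ((2 / k) ^ 2 + M) / 2 with hc
    have hc0 : 0 < c := by positivity
    have hcM : c < M := by rw [hc]; linarith
    have hsc : 2 / k < Real.sqrt c := by
      rw [show (2 / k : ℝ) = Real.sqrt ((2 / k) ^ 2) by
        rw [Real.sqrt_sq (by positivity)]]
      exact Real.sqrt_lt_sqrt (by positivity) (by rw [hc]; linarith)
    have := hreal c hc0 hcM
    rw [← not_lt] at this
    exact this (by calc (2:ℝ) = (2 / k) * k := by field_simp
      _ < Real.sqrt c * k := by exact mul_lt_mul_of_pos_right hsc hkpos)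
  rw [← ENNReal.ofReal_toReal hKfin, ← ENNReal.ofReal_mul (Real.sqrt_nonneg _),
    show (2 : ℝ≥0∞) = ENNReal.ofReal 2 by norm_num]
  exact ENNReal.ofReal_le_ofReal hgoal

theorem one_dim_information_tail_bound
    {Ω : Type*} [MeasureSpace Ω] [IsProbabilityMeasure (ℙ : Measure Ω)]
    (X : Ω → ℝ) (hXm : Measurable X)
    (f : ℝ → ℝ) (hf0 : ∀ x, 0 ≤ f x) (hfm : Measurable f)
    (hdens : Measure.map X ℙ = volume.withDensity (fun x => ENNReal.ofReal (f x)))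
    (hlc : ∀ x y : ℝ, ∀ l : ℝ, 0 ≤ l → l ≤ 1 →
      f x ^ l * f y ^ (1 - l) ≤ f (l * x + (1 - l) * y))
    (t : ℝ) (ht : 0 < t) :
    (ℙ {ω | t ≤ |Real.log (f (X ω)) - ∫ ω', Real.log (f (X ω'))|}).toReal
      ≤ 4 * Real.exp (-t / 2) := by
  set ν : Measure ℝ := volume.withDensity (fun x => ENNReal.ofReal (f x)) with hν
  have hνprob : IsProbabilityMeasure ν := hdens ▸ Measure.isProbabilityMeasure_map hXm.aemeasurable
  have hint : ∫⁻ x, ENNReal.ofReal (f x) = 1 := by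
    have h := hνprob.measure_univ
    rwa [hν, withDensity_apply _ MeasurableSet.univ, Measure.restrict_univ] at h
  set M := sSup (Set.range f) with hMdef
  obtain ⟨hMpos, hkey⟩ := key_M f hf0 hfm hlc hint
  have hbdd := f_bddAbove f hf0 hfm hlc hint
  have hfM : ∀ x, f x ≤ M := fun x => le_csSup hbdd ⟨x, rfl⟩
  set K := ∫⁻ x, ENNReal.ofReal (Real.sqrt (f x)) with hKdef
  -- a.e. positivity of f under ν
  have haeν : ∀ᵐ x ∂ν, 0 < f x := by
    rw [ae_iff]
    have hSm : MeasurableSet {x : ℝ | f x ≤ 0} := measurableSet_le hfm measurable_const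
    have : {x : ℝ | ¬ 0 < f x} = {x : ℝ | f x ≤ 0} := by ext x; simp [not_lt]
    rw [this, hν, withDensity_apply _ hSm]
    have : ∀ x ∈ {x : ℝ | f x ≤ 0}, ENNReal.ofReal (f x) = 0 := by
      intro x hx; simpa using hx
    rw [setLIntegral_congr_fun hSm this]
    simp
  -- the lintegral bound for sqrt(M / f)
  have hsqm : Measurable fun x => Real.sqrt (M / f x) :=
    Real.continuous_sqrt.measurable.comp (measurable_const.div hfm)
  have hsq_lint : ∫⁻ x, ENNReal.ofReal (Real.sqrt (M / f x)) ∂ν ≤ 2 := by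
    rw [hν, lintegral_withDensity_eq_lintegral_mul volume hfm.ennreal_ofReal
      hsqm.ennreal_ofReal]
    have hpt : ∀ x, ENNReal.ofReal (f x) * ENNReal.ofReal (Real.sqrt (M / f x))
        = ENNReal.ofReal (Real.sqrt M) * ENNReal.ofReal (Real.sqrt (f x)) := by
      intro x
      rcases (hf0 x).lt_or_eq with h | h
      · rw [← ENNReal.ofReal_mul (hf0 x), ← ENNReal.ofReal_mul (Real.sqrt_nonneg M)]
        congr 1
        rw [Real.sqrt_div hMpos.le]
        calc f x * (Real.sqrt M / Real.sqrt (f x))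
            = Real.sqrt M * (f x / Real.sqrt (f x)) := by ring
          _ = Real.sqrt M * Real.sqrt (f x) := by rw [Real.div_sqrt]
      · rw [← h]; simp
    calc ∫⁻ x, (fun x => ENNReal.ofReal (f x)) x * (fun x => ENNReal.ofReal (Real.sqrt (M / f x))) x
        = ∫⁻ x, ENNReal.ofReal (Real.sqrt M) * ENNReal.ofReal (Real.sqrt (f x)) := by
          exact lintegral_congr hpt
      _ = ENNReal.ofReal (Real.sqrt M) * K := lintegral_const_mul _ (by fun_prop)
      _ ≤ 2 := hkey
  -- Bochner integral of sqrt(M/f)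
  have hsq_nonneg : ∀ x, (0:ℝ) ≤ Real.sqrt (M / f x) := fun x => Real.sqrt_nonneg _
  have hsq_int : Integrable (fun x => Real.sqrt (M / f x)) ν := by
    refine ⟨hsqm.aestronglyMeasurable, ?_⟩
    rw [hasFiniteIntegral_iff_ofReal (Filter.Eventually.of_forall hsq_nonneg)]
    exact lt_of_le_of_lt hsq_lint (by norm_num)
  have hsq_val : ∫ x, Real.sqrt (M / f x) ∂ν ≤ 2 := by
    rw [integral_eq_lintegral_of_nonneg_ae (Filter.Eventually.of_forall hsq_nonneg)
      hsqm.aestronglyMeasurable]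
    exact ENNReal.toReal_le_of_le_ofReal (by norm_num)
      (le_trans hsq_lint (by norm_num [ENNReal.ofReal_ofNat]))
  -- φ = log M - log f
  set φ : ℝ → ℝ := fun x => Real.log M - Real.log (f x) with hφdef
  have hφm : Measurable φ := measurable_const.sub (Real.measurable_log.comp hfm)
  have hφ_nonneg : ∀ᵐ x ∂ν, 0 ≤ φ x := by
    filter_upwards [haeν] with x hx
    have := Real.log_le_log hx (hfM x)
    simp only [hφdef]; linarith
  have hφ_le2 : ∀ᵐ x ∂ν, φ x ≤ 2 * (Real.sqrt (M / f x) - 1) := by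
    filter_upwards [haeν] with x hx
    have hdiv : 0 < M / f x := div_pos hMpos hx
    have h1 : Real.log (Real.sqrt (M / f x)) ≤ Real.sqrt (M / f x) - 1 :=
      Real.log_le_sub_one_of_pos (Real.sqrt_pos.mpr hdiv)
    rw [Real.log_sqrt hdiv.le, Real.log_div hMpos.ne' hx.ne'] at h1
    simp only [hφdef]; linarith
  have hφ_int : Integrable φ ν := by
    refine Integrable.mono (hsq_int.const_mul 2) hφm.aestronglyMeasurable ?_
    filter_upwards [hφ_nonneg, hφ_le2] with x h0 h2
    rw [Real.norm_eq_abs, Real.norm_eq_abs, abs_of_nonneg h0,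
      abs_of_nonneg (by positivity : (0:ℝ) ≤ 2 * Real.sqrt (M / f x))]
    linarith
  have hφ_mean_le : ∫ x, φ x ∂ν ≤ 2 := by
    have hint2 : Integrable (fun x => 2 * (Real.sqrt (M / f x) - 1)) ν :=
      (hsq_int.sub (integrable_const 1)).const_mul 2
    calc ∫ x, φ x ∂ν ≤ ∫ x, 2 * (Real.sqrt (M / f x) - 1) ∂ν :=
          integral_mono_ae hφ_int hint2 hφ_le2
      _ = 2 * ((∫ x, Real.sqrt (M / f x) ∂ν) - 1) := by
          rw [integral_const_mul, integral_sub hsq_int (integrable_const 1),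
            integral_const]
          simp [hνprob.measure_univ]
      _ ≤ 2 := by linarith
  have hφ_mean_nonneg : 0 ≤ ∫ x, φ x ∂ν := integral_nonneg_of_ae hφ_nonneg
  -- integrability of log f and identification of the mean
  have hlog_int : Integrable (fun x => Real.log (f x)) ν := by
    have : (fun x => Real.log M - φ x) = fun x => Real.log (f x) := by
      funext x; simp only [hφdef]; ring
    exact this ▸ (integrable_const (Real.log M)).sub hφ_int
  set m := ∫ ω', Real.log (f (X ω')) with hmdef
  have hm : m = ∫ x, Real.log (f x) ∂ν := by
    rw [hmdef, ← hdens]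
    exact (integral_map hXm.aemeasurable
      (Real.measurable_log.comp hfm).aestronglyMeasurable).symm
  have hm_eq : m = Real.log M - ∫ x, φ x ∂ν := by
    rw [hm]
    have : (fun x => Real.log (f x)) = fun x => Real.log M - φ x := by
      funext x; simp only [hφdef]; ring
    rw [this, integral_sub (integrable_const _) hφ_int, integral_const]
    simp [hνprob.measure_univ]
  have hm_le : m ≤ Real.log M := by rw [hm_eq]; linarith
  have hm_ge : Real.log M - 2 ≤ m := by rw [hm_eq]; linarith
  have sqrtexp : ∀ z : ℝ, Real.sqrt (Real.exp z) = Real.exp (z / 2) := by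
    intro z
    rw [show Real.exp z = Real.exp (z / 2) ^ 2 by rw [sq, ← Real.exp_add]; ring_nf,
      Real.sqrt_sq (Real.exp_nonneg _)]
  -- the event
  set A := {x : ℝ | t ≤ |Real.log (f x) - m|} with hAdef
  have hAm : MeasurableSet A :=
    measurableSet_le measurable_const ((Real.measurable_log.comp hfm).sub measurable_const).abs
  have hPA : ℙ {ω | t ≤ |Real.log (f (X ω)) - m|} = ν A := by
    have h1 : {ω | t ≤ |Real.log (f (X ω)) - m|} = X ⁻¹' A := rfl
    rw [h1, ← Measure.map_apply hXm hAm, hdens]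
  rw [hPA]
  rcases le_or_gt t (4 * Real.log 2) with hcase | hcase
  · -- trivial bound
    have h1 : (ν A).toReal ≤ 1 := by
      have h2 : ν A ≤ 1 := by
        rw [← hνprob.measure_univ]; exact measure_mono (subset_univ A)
      calc (ν A).toReal ≤ (1 : ℝ≥0∞).toReal := ENNReal.toReal_mono (by norm_num) h2
        _ = 1 := by norm_num
    refine h1.trans ?_
    have hexp4 : Real.exp (2 * Real.log 2) = 4 := by
      rw [two_mul, Real.exp_add, Real.exp_log two_pos]; norm_num
    have h3 : Real.exp (-(2 * Real.log 2)) ≤ Real.exp (-t / 2) :=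
      Real.exp_le_exp.mpr (by linarith)
    rw [Real.exp_neg, hexp4] at h3
    nlinarith
  · -- tail bound
    have hlog2 : (0.6931471803 : ℝ) < Real.log 2 := Real.log_two_gt_d9
    have ht2 : 2 < t := by linarith
    have hν0 : ν {x : ℝ | f x ≤ 0} = 0 := by
      have hSm : MeasurableSet {x : ℝ | f x ≤ 0} := measurableSet_le hfm measurable_const
      rw [hν, withDensity_apply _ hSm]
      have hz : ∀ x ∈ {x : ℝ | f x ≤ 0}, ENNReal.ofReal (f x) = 0 := by
        intro x hx; simpa using hx
      rw [setLIntegral_congr_fun hSm hz]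
      simp
    set B := {x : ℝ | f x ≤ Real.exp (m - t)} with hBdef
    have hBm : MeasurableSet B := measurableSet_le hfm measurable_const
    have hAB : ν A ≤ ν B := by
      have hsub : A ⊆ B ∪ {x : ℝ | f x ≤ 0} := by
        intro x hxA
        rcases le_or_gt (f x) 0 with hfx | hfx
        · exact Or.inr hfx
        · left
          have hub : Real.log (f x) - m ≤ 2 := by
            have := Real.log_le_log hfx (hfM x)
            linarith
          rcases abs_cases (Real.log (f x) - m) with ⟨heq, _⟩ | ⟨heq, _⟩
          · exfalso
            have : t ≤ Real.log (f x) - m := heq ▸ hxA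
            linarith
          · have hxt : t ≤ -(Real.log (f x) - m) := heq ▸ hxA
            have : Real.log (f x) ≤ m - t := by linarith
            calc f x = Real.exp (Real.log (f x)) := (Real.exp_log hfx).symm
              _ ≤ Real.exp (m - t) := Real.exp_le_exp.mpr this
      calc ν A ≤ ν (B ∪ {x : ℝ | f x ≤ 0}) := measure_mono hsub
        _ ≤ ν B + ν {x : ℝ | f x ≤ 0} := measure_union_le _ _
        _ = ν B := by rw [hν0, add_zero]
    have hB_bound : ν B ≤ ENNReal.ofReal (Real.exp ((m - t) / 2)) * K := by
      rw [hν, withDensity_apply _ hBm]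
      calc ∫⁻ x in B, ENNReal.ofReal (f x)
          ≤ ∫⁻ x in B, ENNReal.ofReal (Real.exp ((m - t) / 2))
              * ENNReal.ofReal (Real.sqrt (f x)) := by
            apply setLIntegral_mono (by fun_prop)
            intro x hxB
            rw [← ENNReal.ofReal_mul (Real.exp_nonneg _)]
            apply ENNReal.ofReal_le_ofReal
            have hsq : Real.sqrt (f x) ≤ Real.exp ((m - t) / 2) := by
              have h1 : Real.sqrt (f x) ≤ Real.sqrt (Real.exp (m - t)) :=
                Real.sqrt_le_sqrt hxB
              rwa [sqrtexp] at h1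
            calc f x = Real.sqrt (f x) * Real.sqrt (f x) := (Real.mul_self_sqrt (hf0 x)).symm
              _ ≤ Real.exp ((m - t) / 2) * Real.sqrt (f x) :=
                  mul_le_mul_of_nonneg_right hsq (Real.sqrt_nonneg _)
        _ = ENNReal.ofReal (Real.exp ((m - t) / 2))
              * ∫⁻ x in B, ENNReal.ofReal (Real.sqrt (f x)) :=
            lintegral_const_mul _ (by fun_prop)
        _ ≤ ENNReal.ofReal (Real.exp ((m - t) / 2)) * K :=
            mul_le_mul_right (setLIntegral_le_lintegral _ _) _
    have hexp_m : Real.exp ((m - t) / 2) ≤ Real.sqrt M * Real.exp (-t / 2) := by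
      have h1 : Real.exp (m / 2) ≤ Real.sqrt M := by
        have h2 : Real.sqrt M = Real.exp (Real.log M / 2) := by
          rw [← sqrtexp (Real.log M), Real.exp_log (show (0:ℝ) < M from hMpos)]
        rw [h2]
        exact Real.exp_le_exp.mpr (by linarith)
      calc Real.exp ((m - t) / 2) = Real.exp (m / 2) * Real.exp (-t / 2) := by
            rw [← Real.exp_add]; ring_nf
        _ ≤ Real.sqrt M * Real.exp (-t / 2) :=
            mul_le_mul_of_nonneg_right h1 (Real.exp_nonneg _)
    have hfinal : ν A ≤ ENNReal.ofReal (4 * Real.exp (-t / 2)) := by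
      calc ν A ≤ ν B := hAB
        _ ≤ ENNReal.ofReal (Real.exp ((m - t) / 2)) * K := hB_bound
        _ ≤ ENNReal.ofReal (Real.sqrt M * Real.exp (-t / 2)) * K :=
            mul_le_mul_left (ENNReal.ofReal_le_ofReal hexp_m) _
        _ = ENNReal.ofReal (Real.exp (-t / 2)) * (ENNReal.ofReal (Real.sqrt M) * K) := by
            rw [ENNReal.ofReal_mul (Real.sqrt_nonneg _)]; ring
        _ ≤ ENNReal.ofReal (Real.exp (-t / 2)) * 2 := mul_le_mul_right hkey _
        _ ≤ ENNReal.ofReal (4 * Real.exp (-t / 2)) := by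
            rw [show (4:ℝ) * Real.exp (-t / 2) = Real.exp (-t / 2) * 4 by ring,
              ENNReal.ofReal_mul (Real.exp_nonneg _)]
            exact mul_le_mul_right (by norm_num) _
    exact ENNReal.toReal_le_of_le_ofReal (by positivity) hfinal
end

section
/- Let η be a positive random variable whose distribution is log-concave (e.g., whose density on (0,∞) with respect to Lebesgue measure is log-concave). Then the normalized moment function p ↦ λ̄_p = E[η^p] / Γ(p+1) is log-concave on [0,∞). Equivalently, for all a ≥ b ≥ c ≥ 0, one has the reverse Lyapunov inequality λ̄_a^{b−c} · λ̄_c^{a−b} ≤ λ̄_b^{a−c}. -/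
open MeasureTheory ProbabilityTheory

section Helpers
open Set Real
open scoped ENNReal NNReal


-- A: integrability of t^p e^{-rt} on Ioi 0
lemma exp_moment_integrable {p r : ℝ} (hp : 0 ≤ p) (hr : 0 < r) :
    IntegrableOn (fun t : ℝ => t ^ p * Real.exp (-(r * t))) (Ioi (0:ℝ)) := by
  have h0 := Real.GammaIntegral_convergent (s := p + 1) (by linarith)
  have h1 : IntegrableOn (fun x : ℝ => Real.exp (-(r * x)) * (r * x) ^ (p + 1 - 1)) (Ioi 0) := by
    have := (integrableOn_Ioi_comp_mul_left_iff
        (fun x : ℝ => Real.exp (-x) * x ^ (p + 1 - 1)) 0 hr).mpr (by simpa using h0)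
    simpa using this
  have h2 : IntegrableOn (fun x : ℝ => r ^ p * (x ^ p * Real.exp (-(r * x)))) (Ioi 0) := by
    apply h1.congr_fun _ measurableSet_Ioi
    intro x hx
    have hx0 : (0:ℝ) < x := hx
    show Real.exp (-(r * x)) * (r * x) ^ (p + 1 - 1) = r ^ p * (x ^ p * Real.exp (-(r * x)))
    rw [add_sub_cancel_right, Real.mul_rpow hr.le hx0.le]
    ring
  have h3 : IntegrableOn (fun x : ℝ => (r ^ p)⁻¹ * (r ^ p * (x ^ p * Real.exp (-(r * x)))))
      (Ioi (0:ℝ)) := h2.const_mul _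
  apply h3.congr_fun _ measurableSet_Ioi
  intro x hx
  show (r ^ p)⁻¹ * (r ^ p * (x ^ p * Real.exp (-(r * x)))) = x ^ p * Real.exp (-(r * x))
  have : r ^ p ≠ 0 := (Real.rpow_pos_of_pos hr p).ne'
  field_simp

-- B: value
lemma exp_moment_value {p r : ℝ} (hp : 0 ≤ p) (hr : 0 < r) :
    ∫ t in Ioi (0:ℝ), t ^ p * Real.exp (-(r * t)) = Real.Gamma (p + 1) / r ^ (p + 1) := by
  have h := Real.integral_rpow_mul_exp_neg_mul_Ioi (a := p + 1) (r := r) (by linarith) hr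
  rw [show p + 1 - 1 = p by ring] at h
  rw [h, one_div, Real.inv_rpow hr.le]
  ring

-- C: chord lemmas for concave rpow
lemma rpow_chord_inside {θ m M u : ℝ} (hθ0 : 0 < θ) (hθ1 : θ < 1) (hm : 0 ≤ m)
    (hmM : m < M) (hum : m ≤ u) (huM : u ≤ M) :
    m ^ θ + (M ^ θ - m ^ θ) / (M - m) * (u - m) ≤ u ^ θ := by
  have hcc := Real.concaveOn_rpow hθ0.le hθ1.le
  set s : ℝ := (M - u) / (M - m) with hs
  have hMm : (0:ℝ) < M - m := by linarith
  have hs0 : 0 ≤ s := div_nonneg (by linarith) hMm.le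
  have hs1 : s ≤ 1 := by rw [hs, div_le_one hMm]; linarith
  have hcomb : s * m + (1 - s) * M = u := by rw [hs]; field_simp; ring
  have h := hcc.2 (mem_Ici.mpr hm) (mem_Ici.mpr (by linarith : (0:ℝ) ≤ M)) hs0
      (by linarith : (0:ℝ) ≤ 1 - s) (by ring)
  simp only [smul_eq_mul, hcomb] at h
  have : m ^ θ + (M ^ θ - m ^ θ) / (M - m) * (u - m) = s * m ^ θ + (1 - s) * M ^ θ := by
    rw [hs]; field_simp; ring
  linarith

lemma rpow_chord_outside {θ m M u : ℝ} (hθ0 : 0 < θ) (hθ1 : θ < 1) (hm : 0 ≤ m)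
    (hmM : m < M) (hu : 0 ≤ u) (huout : u ≤ m ∨ M ≤ u) :
    u ^ θ ≤ m ^ θ + (M ^ θ - m ^ θ) / (M - m) * (u - m) := by
  have hcc := Real.concaveOn_rpow hθ0.le hθ1.le
  have hMm : (0:ℝ) < M - m := by linarith
  rcases huout with hcase | hcase
  · -- u ≤ m : m is combination of u and M
    set s : ℝ := (M - m) / (M - u) with hs
    have hMu : (0:ℝ) < M - u := by linarith
    have hs0 : 0 ≤ s := by positivity
    have hs1 : s ≤ 1 := by rw [hs, div_le_one hMu]; linarith
    have hcomb : s * u + (1 - s) * M = m := by rw [hs]; field_simp; ring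
    have h := hcc.2 (mem_Ici.mpr hu) (mem_Ici.mpr (by linarith : (0:ℝ) ≤ M)) hs0
        (by linarith : (0:ℝ) ≤ 1 - s) (by ring)
    simp only [smul_eq_mul, hcomb] at h
    -- h : s * u^θ + (1-s) * M^θ ≤ m^θ
    have hkey : s * (m ^ θ + (M ^ θ - m ^ θ) / (M - m) * (u - m)) =
        m ^ θ - (1 - s) * M ^ θ := by
      rw [hs]; field_simp; ring
    have hspos : 0 < s := by rw [hs]; positivity
    nlinarith [h, hkey]
  · -- M ≤ u : M is combination of m and u
    rcases eq_or_lt_of_le hcase with rfl | hMu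
    · have : (M ^ θ - m ^ θ) / (M - m) * (M - m) = M ^ θ - m ^ θ := by field_simp
      linarith [this]
    set s : ℝ := (u - M) / (u - m) with hs
    have hum : (0:ℝ) < u - m := by linarith
    have hs0 : 0 ≤ s := div_nonneg (by linarith) hum.le
    have hs1 : s ≤ 1 := by rw [hs, div_le_one hum]; linarith
    have hcomb : s * m + (1 - s) * u = M := by rw [hs]; field_simp; ring
    have h := hcc.2 (mem_Ici.mpr hm) (mem_Ici.mpr hu) hs0
        (by linarith : (0:ℝ) ≤ 1 - s) (by ring)
    simp only [smul_eq_mul, hcomb] at h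
    -- h : s * m^θ + (1-s) * u^θ ≤ M^θ
    have hkey : (1 - s) * (m ^ θ + (M ^ θ - m ^ θ) / (M - m) * (u - m)) =
        M ^ θ - s * m ^ θ := by
      rw [hs]; field_simp; ring
    have h1s : 0 < 1 - s := by
      rw [hs]; rw [sub_pos, div_lt_one hum]; linarith
    nlinarith [h, hkey]


lemma g_tail_exp {g : ℝ → ℝ} (hgnn : ∀ x, 0 ≤ g x)
    (hlc : ∀ x y : ℝ, 0 < x → 0 < y → ∀ l : ℝ, 0 ≤ l → l ≤ 1 →
      g x ^ l * g y ^ (1 - l) ≤ g (l * x + (1 - l) * y))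
    {x₀ x₁ : ℝ} (h0 : 0 < x₀) (h01 : x₀ < x₁) (hg0 : 0 < g x₀) (hg1 : g x₁ ≤ g x₀ / 2)
    {t : ℝ} (ht : x₁ < t) :
    g t ≤ (g x₀ * Real.exp (Real.log 2 / (x₁ - x₀) * x₀)) *
      Real.exp (-(Real.log 2 / (x₁ - x₀) * t)) := by
  set ε : ℝ := Real.log 2 / (x₁ - x₀) with hε
  have hx10 : (0:ℝ) < x₁ - x₀ := by linarith
  have hεpos : 0 < ε := div_pos (Real.log_pos one_lt_two) hx10
  rcases eq_or_lt_of_le (hgnn t) with hgt0 | hgt0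
  · rw [← hgt0]; positivity
  -- main case g t > 0
  set l : ℝ := (t - x₁) / (t - x₀) with hl
  have htx₀ : (0:ℝ) < t - x₀ := by linarith
  have hl0 : 0 < l := div_pos (by linarith) htx₀
  have hl1 : l < 1 := by rw [hl, div_lt_one htx₀]; linarith
  have hcomb : l * x₀ + (1 - l) * t = x₁ := by rw [hl]; field_simp; ring
  have h := hlc x₀ t h0 (by linarith) l hl0.le hl1.le
  rw [hcomb] at h
  have h2 : g t ^ (1 - l) ≤ g x₀ / 2 / g x₀ ^ l := by
    rw [le_div_iff₀ (Real.rpow_pos_of_pos hg0 l)]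
    calc g t ^ (1 - l) * g x₀ ^ l = g x₀ ^ l * g t ^ (1 - l) := by ring
    _ ≤ g x₁ := h
    _ ≤ g x₀ / 2 := hg1
  have h1l : (0:ℝ) < 1 - l := by linarith
  have h3 : g t ≤ (g x₀ / 2 / g x₀ ^ l) ^ (1 / (1 - l)) := by
    have hh := Real.rpow_le_rpow (Real.rpow_nonneg (hgnn t) _) h2
      (by positivity : (0:ℝ) ≤ 1/(1-l))
    rwa [← Real.rpow_mul (hgnn t), mul_one_div, div_self h1l.ne', Real.rpow_one] at hh
  refine h3.trans ?_
  have hrw : g x₀ / 2 / g x₀ ^ l = g x₀ ^ (1 - l) * (2:ℝ)⁻¹ := by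
    rw [Real.rpow_sub hg0, Real.rpow_one]
    field_simp
  rw [hrw, Real.mul_rpow (by positivity) (by norm_num),
    ← Real.rpow_mul hg0.le, mul_one_div, div_self h1l.ne', Real.rpow_one]
  have hinv : ((2:ℝ)⁻¹) ^ (1 / (1 - l)) = Real.exp (-(Real.log 2 / (1 - l))) := by
    rw [Real.rpow_def_of_pos (by norm_num : (0:ℝ) < (2:ℝ)⁻¹), Real.log_inv]
    congr 1
    ring
  rw [hinv]
  have hexp : -(Real.log 2 / (1 - l)) = ε * x₀ + -(ε * t) := by
    have h1 : 1 - l = (x₁ - x₀) / (t - x₀) := by rw [hl]; field_simp; ring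
    rw [h1, hε]
    field_simp
    ring
  rw [hexp, Real.exp_add]
  ring_nf
  exact le_refl _

lemma moment_integrable {g : ℝ → ℝ} (hgm : Measurable g) (hgnn : ∀ x, 0 ≤ g x)
    (hgint : Integrable g volume)
    {K ε x₁ : ℝ} (hx₁ : 0 < x₁) (hε : 0 < ε) (hK : 0 ≤ K)
    (htail : ∀ t, x₁ < t → g t ≤ K * Real.exp (-(ε * t)))
    {p : ℝ} (hp : 0 ≤ p) : IntegrableOn (fun t => t ^ p * g t) (Ioi (0:ℝ)) := by
  have hmeas : Measurable (fun t : ℝ => t ^ p * g t) := by measurability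
  have hsplit : Ioc (0:ℝ) x₁ ∪ Ioi x₁ = Ioi 0 := Ioc_union_Ioi_eq_Ioi hx₁.le
  rw [← hsplit]
  apply IntegrableOn.union
  · -- on Ioc 0 x₁
    have hbig : IntegrableOn (fun t : ℝ => x₁ ^ p * g t) (Ioc 0 x₁) :=
      (hgint.const_mul _).integrableOn
    apply Integrable.mono hbig hmeas.aestronglyMeasurable.restrict
    rw [ae_restrict_iff' measurableSet_Ioc]
    filter_upwards with t ht
    have h1 : 0 < t := ht.1
    have h2 : t ≤ x₁ := ht.2
    rw [Real.norm_eq_abs, Real.norm_eq_abs,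
      abs_of_nonneg (mul_nonneg (Real.rpow_nonneg h1.le p) (hgnn t)),
      abs_of_nonneg (mul_nonneg (Real.rpow_nonneg (by linarith) p) (hgnn t))]
    exact mul_le_mul_of_nonneg_right (Real.rpow_le_rpow h1.le h2 hp) (hgnn t)
  · -- on Ioi x₁
    have hbig : IntegrableOn (fun t : ℝ => K * (t ^ p * Real.exp (-(ε * t)))) (Ioi x₁) :=
      ((exp_moment_integrable hp hε).mono_set (Ioi_subset_Ioi hx₁.le)).const_mul K
    apply Integrable.mono hbig hmeas.aestronglyMeasurable.restrict
    rw [ae_restrict_iff' measurableSet_Ioi]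
    filter_upwards with t ht
    have h1 : (0:ℝ) < t := lt_trans hx₁ ht
    rw [Real.norm_eq_abs, Real.norm_eq_abs,
      abs_of_nonneg (mul_nonneg (Real.rpow_nonneg h1.le p) (hgnn t)),
      abs_of_nonneg (by positivity)]
    calc t ^ p * g t ≤ t ^ p * (K * Real.exp (-(ε * t))) :=
          mul_le_mul_of_nonneg_left (htail t ht) (by positivity)
    _ = K * (t ^ p * Real.exp (-(ε * t))) := by ring

lemma key_nonneg {g : ℝ → ℝ} (hgm : Measurable g) (hgnn : ∀ x, 0 ≤ g x)
    (hlc : ∀ x y : ℝ, 0 < x → 0 < y → ∀ l : ℝ, 0 ≤ l → l ≤ 1 →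
      g x ^ l * g y ^ (1 - l) ≤ g (l * x + (1 - l) * y))
    {ρ lam : ℝ} (hρ : 0 < ρ) (hlam : 0 < lam)
    {a b c : ℝ} (ha : 0 ≤ a) (hac : a < c) (hcb : c < b)
    (hDint : ∀ p : ℝ, 0 ≤ p →
      IntegrableOn (fun t => t ^ p * (g t - ρ * Real.exp (-(lam * t)))) (Ioi (0:ℝ)))
    (hDa : ∫ t in Ioi (0:ℝ), t ^ a * (g t - ρ * Real.exp (-(lam * t))) = 0)
    (hDb : ∫ t in Ioi (0:ℝ), t ^ b * (g t - ρ * Real.exp (-(lam * t))) = 0) :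
    0 ≤ ∫ t in Ioi (0:ℝ), t ^ c * (g t - ρ * Real.exp (-(lam * t))) := by
  have hb : (0:ℝ) ≤ b := by linarith
  have hc0 : (0:ℝ) ≤ c := by linarith
  have hba : (0:ℝ) < b - a := by linarith
  set D : ℝ → ℝ := fun t => g t - ρ * Real.exp (-(lam * t)) with hD
  set U : Set ℝ := {t : ℝ | 0 < t ∧ 0 < D t} with hU
  -- order convexity of U
  have hUconv : ∀ t₁, t₁ ∈ U → ∀ t₂, t₂ ∈ U → ∀ t, t₁ < t → t < t₂ → t ∈ U := by
    intro t₁ h₁ t₂ h₂ t hlt₁ hlt₂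
    have h0t : 0 < t := lt_trans h₁.1 hlt₁
    refine ⟨h0t, ?_⟩
    set s := (t₂ - t) / (t₂ - t₁) with hs
    have h21 : 0 < t₂ - t₁ := by linarith
    have hs0 : 0 < s := div_pos (by linarith) h21
    have hs1 : s < 1 := by rw [hs, div_lt_one h21]; linarith
    have hcomb : s * t₁ + (1 - s) * t₂ = t := by rw [hs]; field_simp; ring
    have hlc' := hlc t₁ t₂ h₁.1 h₂.1 s hs0.le hs1.le
    rw [hcomb] at hlc'
    have e1 : ρ * Real.exp (-(lam * t₁)) < g t₁ := by
      have := h₁.2; simp only [hD] at this; linarith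
    have e2 : ρ * Real.exp (-(lam * t₂)) < g t₂ := by
      have := h₂.2; simp only [hD] at this; linarith
    have hmono : (ρ * Real.exp (-(lam * t₁))) ^ s * (ρ * Real.exp (-(lam * t₂))) ^ (1-s)
        < g t₁ ^ s * g t₂ ^ (1 - s) :=
      mul_lt_mul'' (Real.rpow_lt_rpow (by positivity) e1 hs0)
        (Real.rpow_lt_rpow (by positivity) e2 (by linarith))
        (Real.rpow_nonneg (by positivity) _) (Real.rpow_nonneg (by positivity) _)
    have hid : (ρ * Real.exp (-(lam * t₁))) ^ s * (ρ * Real.exp (-(lam * t₂))) ^ (1-s)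
        = ρ * Real.exp (-(lam * t)) := by
      rw [Real.mul_rpow hρ.le (Real.exp_nonneg _), Real.mul_rpow hρ.le (Real.exp_nonneg _),
        ← Real.exp_mul, ← Real.exp_mul]
      calc ρ ^ s * Real.exp (-(lam * t₁) * s) * (ρ ^ (1 - s) * Real.exp (-(lam * t₂) * (1 - s)))
          = (ρ ^ s * ρ ^ (1 - s)) * Real.exp (-(lam * t₁) * s + -(lam * t₂) * (1 - s)) := by
            rw [Real.exp_add]; ring
        _ = ρ * Real.exp (-(lam * t)) := by
            rw [← Real.rpow_add hρ, show s + (1 - s) = (1:ℝ) by ring, Real.rpow_one]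
            congr 1
            rw [← hcomb]; ring
    have hlt : ρ * Real.exp (-(lam * t)) < g t := by
      rw [← hid]; exact lt_of_lt_of_le hmono hlc'
    simp only [hD]; linarith
  by_cases hsub : U.Subsingleton
  · -- degenerate case : D ≤ 0 a.e. hence D = 0 a.e.
    have hU0 : volume U = 0 := hsub.measure_zero _
    have haeU : ∀ᵐ t ∂(volume : Measure ℝ), t ∉ U := by
      rw [ae_iff]
      simpa [Set.setOf_mem_eq] using hU0
    have hzero : (fun t => t ^ a * D t) =ᵐ[volume.restrict (Ioi 0)] 0 := by
      have h1 : 0 ≤ᵐ[volume.restrict (Ioi 0)] (fun t => -(t ^ a * D t)) := by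
        refine (ae_restrict_iff' measurableSet_Ioi).mpr ?_
        filter_upwards [haeU] with t htU ht
        simp only [Pi.zero_apply]
        have ht0 : (0:ℝ) < t := ht
        have hDt : D t ≤ 0 := by
          by_contra hcon; push_neg at hcon; exact htU ⟨ht0, hcon⟩
        have := mul_nonneg (Real.rpow_nonneg ht0.le a) (neg_nonneg.mpr hDt)
        simpa using this
      have h2 : Integrable (fun t => -(t ^ a * D t)) (volume.restrict (Ioi 0)) :=
        (hDint a ha).neg
      have h3 : ∫ t in Ioi (0:ℝ), -(t ^ a * D t) = 0 := by
        rw [integral_neg]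
        simp only [hD] at hDa ⊢
        rw [hDa, neg_zero]
      have h4 := (integral_eq_zero_iff_of_nonneg_ae h1 h2).mp h3
      filter_upwards [h4] with t ht
      simp only [Pi.zero_apply] at ht ⊢
      linarith [ht]
    have hzc : ∫ t in Ioi (0:ℝ), t ^ c * D t = 0 := by
      have hDz : D =ᵐ[volume.restrict (Ioi 0)] 0 := by
        filter_upwards [hzero, (ae_restrict_iff' measurableSet_Ioi).mpr
          (Filter.Eventually.of_forall (fun t (ht : t ∈ Ioi (0:ℝ)) => ht))] with t h1 h2
        have ht0 : (0:ℝ) < t := h2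
        have hta : t ^ a ≠ 0 := (Real.rpow_pos_of_pos ht0 a).ne'
        have : t ^ a * D t = 0 := h1
        exact (mul_eq_zero.mp this).resolve_left hta
      calc ∫ t in Ioi (0:ℝ), t ^ c * D t = ∫ t in Ioi (0:ℝ), (0:ℝ) := by
            apply integral_congr_ae
            filter_upwards [hDz] with t ht
            simp only [Pi.zero_apply] at ht
            rw [ht, mul_zero]
        _ = 0 := integral_zero _ _
      
    simp only [hD] at hzc
    rw [hzc]
  · -- main case: U has two distinct points
    obtain ⟨x, hx, y, hy, hxy⟩ := Set.not_subsingleton_iff.mp hsub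
    have hUne : U.Nonempty := ⟨x, hx⟩
    have hUbdd : BddBelow U := ⟨0, fun u hu => hu.1.le⟩
    set m := sInf U with hm
    have hm0 : 0 ≤ m := le_csInf hUne fun u hu => hu.1.le
    -- helper for pointwise sign: rewrite t^c
    have htc : ∀ t : ℝ, 0 < t → t ^ c = t ^ (c - a) * t ^ a := by
      intro t ht
      rw [← Real.rpow_add ht]; ring_nf
    by_cases hbdd : BddAbove U
    · -- bounded case : chord construction
      set M := sSup U with hM
      have hmM : m < M := by
        rcases hxy.lt_or_gt with h | h
        · exact lt_of_le_of_lt (csInf_le hUbdd hx) (lt_of_lt_of_le h (le_csSup hbdd hy))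
        · exact lt_of_le_of_lt (csInf_le hUbdd hy) (lt_of_lt_of_le h (le_csSup hbdd hx))
      have hMpos : 0 < M := lt_of_le_of_lt hm0 hmM
      have hmem : ∀ t, m < t → t < M → t ∈ U := by
        intro t h1 h2
        obtain ⟨u₁, hu₁, hu₁t⟩ := exists_lt_of_csInf_lt hUne h1
        obtain ⟨u₂, hu₂, hu₂t⟩ := exists_lt_of_lt_csSup hUne h2
        exact hUconv u₁ hu₁ u₂ hu₂ t hu₁t hu₂t
      set θ := (c - a) / (b - a) with hθ
      have hθ0 : 0 < θ := div_pos (by linarith) hba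
      have hθ1 : θ < 1 := by rw [hθ, div_lt_one hba]; linarith
      set m' := m ^ (b - a) with hm'
      set M' := M ^ (b - a) with hM'
      have hm'0 : 0 ≤ m' := Real.rpow_nonneg hm0 _
      have hm'M' : m' < M' := Real.rpow_lt_rpow hm0 hmM hba
      set sl := (M' ^ θ - m' ^ θ) / (M' - m') with hsl
      have huθ : ∀ t : ℝ, 0 < t → (t ^ (b - a)) ^ θ = t ^ (c - a) := by
        intro t ht
        rw [← Real.rpow_mul ht.le, hθ, mul_div_cancel₀ _ hba.ne']
      have hpoint : ∀ t ∈ Ioi (0:ℝ),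
          0 ≤ (t ^ c - (m' ^ θ + sl * (t ^ (b - a) - m')) * t ^ a) * D t := by
        intro t ht
        have ht0 : (0:ℝ) < t := ht
        have hta : (0:ℝ) ≤ t ^ a := Real.rpow_nonneg ht0.le a
        rcases lt_trichotomy (D t) 0 with hDt | hDt | hDt
        · have htU : t ∉ U := fun htU => absurd htU.2 (by linarith)
          have hout : t ≤ m ∨ M ≤ t := by
            by_contra hcon
            push_neg at hcon
            exact htU (hmem t hcon.1 hcon.2)
          have hout' : t ^ (b - a) ≤ m' ∨ M' ≤ t ^ (b - a) :=
            hout.imp (fun h => Real.rpow_le_rpow ht0.le h hba.le)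
              (fun h => Real.rpow_le_rpow hMpos.le h hba.le)
          have hch := rpow_chord_outside hθ0 hθ1 hm'0 hm'M'
            (Real.rpow_nonneg ht0.le _) hout'
          rw [huθ t ht0] at hch
          have hψ : t ^ c - (m' ^ θ + sl * (t ^ (b - a) - m')) * t ^ a ≤ 0 := by
            rw [htc t ht0]
            calc t ^ (c-a) * t ^ a - (m' ^ θ + sl * (t ^ (b - a) - m')) * t ^ a
                = (t ^ (c-a) - (m' ^ θ + sl * (t ^ (b - a) - m'))) * t ^ a := by ring
              _ ≤ 0 := mul_nonpos_iff.mpr (Or.inr ⟨by linarith, hta⟩)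
          exact mul_nonneg_iff.mpr (Or.inr ⟨hψ, hDt.le⟩)
        · rw [hDt, mul_zero]
        · have htU : t ∈ U := ⟨ht0, hDt⟩
          have h1 : m ≤ t := csInf_le hUbdd htU
          have h2 : t ≤ M := le_csSup hbdd htU
          have hu1 : m' ≤ t ^ (b - a) := Real.rpow_le_rpow hm0 h1 hba.le
          have hu2 : t ^ (b - a) ≤ M' := Real.rpow_le_rpow ht0.le h2 hba.le
          have hch := rpow_chord_inside hθ0 hθ1 hm'0 hm'M' hu1 hu2
          rw [huθ t ht0] at hch
          have hψ : 0 ≤ t ^ c - (m' ^ θ + sl * (t ^ (b - a) - m')) * t ^ a := by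
            rw [htc t ht0]
            calc (0:ℝ) ≤ (t ^ (c-a) - (m' ^ θ + sl * (t ^ (b - a) - m'))) * t ^ a :=
                  mul_nonneg (by linarith) hta
              _ = t ^ (c-a) * t ^ a - (m' ^ θ + sl * (t ^ (b - a) - m')) * t ^ a := by ring
          exact mul_nonneg hψ hDt.le
      -- integral assembly
      set al := m' ^ θ - sl * m' with hal
      have hfun : EqOn (fun t => (t ^ c - (m' ^ θ + sl * (t ^ (b - a) - m')) * t ^ a) * D t)
          (fun t => t ^ c * D t - al * (t ^ a * D t) - sl * (t ^ b * D t)) (Ioi (0:ℝ)) := by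
        intro t ht
        have ht0 : (0:ℝ) < t := ht
        have hab' : t ^ (b - a) * t ^ a = t ^ b := by
          rw [← Real.rpow_add ht0]; ring_nf
        simp only
        rw [hal, ← hab']
        ring
      have h1 : 0 ≤ ∫ t in Ioi (0:ℝ),
          (t ^ c - (m' ^ θ + sl * (t ^ (b - a) - m')) * t ^ a) * D t :=
        setIntegral_nonneg measurableSet_Ioi hpoint
      rw [setIntegral_congr_fun measurableSet_Ioi hfun] at h1
      have e1 : ∫ t in Ioi (0:ℝ), (t ^ c * D t - al * (t ^ a * D t) - sl * (t ^ b * D t))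
          = (∫ t in Ioi (0:ℝ), (t ^ c * D t - al * (t ^ a * D t)))
            - ∫ t in Ioi (0:ℝ), sl * (t ^ b * D t) :=
        integral_sub ((hDint c hc0).sub ((hDint a ha).const_mul al))
          ((hDint b hb).const_mul sl)
      have e2 : ∫ t in Ioi (0:ℝ), (t ^ c * D t - al * (t ^ a * D t))
          = (∫ t in Ioi (0:ℝ), t ^ c * D t) - ∫ t in Ioi (0:ℝ), al * (t ^ a * D t) :=
        integral_sub (hDint c hc0) ((hDint a ha).const_mul al)
      have e3 : ∫ t in Ioi (0:ℝ), al * (t ^ a * D t)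
          = al * ∫ t in Ioi (0:ℝ), t ^ a * D t := integral_const_mul al _
      have e4 : ∫ t in Ioi (0:ℝ), sl * (t ^ b * D t)
          = sl * ∫ t in Ioi (0:ℝ), t ^ b * D t := integral_const_mul sl _
      rw [e1, e2, e3, e4] at h1
      simp only [hD] at h1
      rw [hDa, hDb] at h1
      simpa using h1
    · -- unbounded case
      have hmem : ∀ t, m < t → t ∈ U := by
        intro t h1
        obtain ⟨u₁, hu₁, hu₁t⟩ := exists_lt_of_csInf_lt hUne h1
        obtain ⟨u₂, hu₂, hu₂t⟩ := not_bddAbove_iff.mp hbdd t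
        exact hUconv u₁ hu₁ u₂ hu₂ t hu₁t hu₂t
      have hpoint : ∀ t ∈ Ioi (0:ℝ), 0 ≤ (t ^ c - m ^ (c - a) * t ^ a) * D t := by
        intro t ht
        have ht0 : (0:ℝ) < t := ht
        have hta : (0:ℝ) ≤ t ^ a := Real.rpow_nonneg ht0.le a
        rcases lt_trichotomy (D t) 0 with hDt | hDt | hDt
        · have htU : t ∉ U := fun htU => absurd htU.2 (by linarith)
          have hout : t ≤ m := by
            by_contra hcon
            push_neg at hcon
            exact htU (hmem t hcon)
          have hch : t ^ (c - a) ≤ m ^ (c - a) :=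
            Real.rpow_le_rpow ht0.le hout (by linarith)
          have hψ : t ^ c - m ^ (c - a) * t ^ a ≤ 0 := by
            rw [htc t ht0]
            calc t ^ (c-a) * t ^ a - m ^ (c - a) * t ^ a
                = (t ^ (c-a) - m ^ (c - a)) * t ^ a := by ring
              _ ≤ 0 := mul_nonpos_iff.mpr (Or.inr ⟨by linarith, hta⟩)
          exact mul_nonneg_iff.mpr (Or.inr ⟨hψ, hDt.le⟩)
        · rw [hDt, mul_zero]
        · have htU : t ∈ U := ⟨ht0, hDt⟩
          have h1 : m ≤ t := csInf_le hUbdd htU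
          have hch : m ^ (c - a) ≤ t ^ (c - a) :=
            Real.rpow_le_rpow hm0 h1 (by linarith)
          have hψ : 0 ≤ t ^ c - m ^ (c - a) * t ^ a := by
            rw [htc t ht0]
            calc (0:ℝ) ≤ (t ^ (c-a) - m ^ (c - a)) * t ^ a := mul_nonneg (by linarith) hta
              _ = t ^ (c-a) * t ^ a - m ^ (c - a) * t ^ a := by ring
          exact mul_nonneg hψ hDt.le
      have hfun : EqOn (fun t => (t ^ c - m ^ (c - a) * t ^ a) * D t)
          (fun t => t ^ c * D t - m ^ (c - a) * (t ^ a * D t)) (Ioi (0:ℝ)) := by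
        intro t ht
        simp only
        ring
      have h1 : 0 ≤ ∫ t in Ioi (0:ℝ), (t ^ c - m ^ (c - a) * t ^ a) * D t :=
        setIntegral_nonneg measurableSet_Ioi hpoint
      rw [setIntegral_congr_fun measurableSet_Ioi hfun] at h1
      have e2 : ∫ t in Ioi (0:ℝ), (t ^ c * D t - m ^ (c - a) * (t ^ a * D t))
          = (∫ t in Ioi (0:ℝ), t ^ c * D t) - ∫ t in Ioi (0:ℝ), m ^ (c - a) * (t ^ a * D t) :=
        integral_sub (hDint c hc0) ((hDint a ha).const_mul _)
      have e3 : ∫ t in Ioi (0:ℝ), m ^ (c - a) * (t ^ a * D t)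
          = m ^ (c - a) * ∫ t in Ioi (0:ℝ), t ^ a * D t := integral_const_mul _ _
      rw [e2, e3] at h1
      simp only [hD] at h1
      rw [hDa] at h1
      simpa using h1

lemma core_ineq {g : ℝ → ℝ} (hgm : Measurable g) (hgnn : ∀ x, 0 ≤ g x)
    (hlc : ∀ x y : ℝ, 0 < x → 0 < y → ∀ l : ℝ, 0 ≤ l → l ≤ 1 →
      g x ^ l * g y ^ (1 - l) ≤ g (l * x + (1 - l) * y))
    (hint : ∀ p : ℝ, 0 ≤ p → IntegrableOn (fun t => t ^ p * g t) (Ioi (0:ℝ)))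
    (hIpos : ∀ p : ℝ, 0 ≤ p → 0 < ∫ t in Ioi (0:ℝ), t ^ p * g t)
    {a b l : ℝ} (ha : 0 ≤ a) (hab : a < b) (hl0 : 0 < l) (hl1 : l < 1) :
    ((∫ t in Ioi (0:ℝ), t ^ a * g t) / Real.Gamma (a + 1)) ^ l *
      ((∫ t in Ioi (0:ℝ), t ^ b * g t) / Real.Gamma (b + 1)) ^ (1 - l) ≤
      (∫ t in Ioi (0:ℝ), t ^ (l * a + (1 - l) * b) * g t) /
        Real.Gamma (l * a + (1 - l) * b + 1) := by
  have hb : (0:ℝ) ≤ b := by linarith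
  set c : ℝ := l * a + (1 - l) * b with hc
  have hac : a < c := by nlinarith
  have hcb : c < b := by nlinarith
  have hc0 : (0:ℝ) ≤ c := by linarith
  set Ia := ∫ t in Ioi (0:ℝ), t ^ a * g t with hIa
  set Ib := ∫ t in Ioi (0:ℝ), t ^ b * g t with hIb
  set Ic := ∫ t in Ioi (0:ℝ), t ^ c * g t with hIc
  have hIa0 : 0 < Ia := hIpos a ha
  have hIb0 : 0 < Ib := hIpos b hb
  have hGa : 0 < Real.Gamma (a + 1) := Real.Gamma_pos_of_pos (by linarith)
  have hGb : 0 < Real.Gamma (b + 1) := Real.Gamma_pos_of_pos (by linarith)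
  have hGc : 0 < Real.Gamma (c + 1) := Real.Gamma_pos_of_pos (by linarith)
  set Ga := Real.Gamma (a + 1)
  set Gb := Real.Gamma (b + 1)
  set Gc := Real.Gamma (c + 1)
  have hX : (0:ℝ) < Ia * Gb / (Ib * Ga) := by positivity
  set lam : ℝ := (Ia * Gb / (Ib * Ga)) ^ (1 / (b - a)) with hlam
  have hlam0 : 0 < lam := Real.rpow_pos_of_pos hX _
  set ρ : ℝ := Ia * lam ^ (a + 1) / Ga with hρ
  have hρ0 : 0 < ρ := by positivity
  have hba : (0:ℝ) < b - a := by linarith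
  have hlam_pow : lam ^ (b - a) = Ia * Gb / (Ib * Ga) := by
    rw [hlam, ← Real.rpow_mul hX.le, one_div, inv_mul_cancel₀ hba.ne', Real.rpow_one]
  have hEa : ρ * (Ga / lam ^ (a + 1)) = Ia := by
    rw [hρ]
    field_simp
  have hEb : ρ * (Gb / lam ^ (b + 1)) = Ib := by
    rw [hρ]
    have hsplit : lam ^ (b + 1) = lam ^ (a + 1) * lam ^ (b - a) := by
      rw [← Real.rpow_add hlam0]; ring_nf
    rw [hsplit, hlam_pow]
    have h1 : lam ^ (a+1) ≠ 0 := (Real.rpow_pos_of_pos hlam0 _).ne'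
    field_simp
  -- integrability of exponential moments
  have hZint : ∀ p : ℝ, 0 ≤ p →
      IntegrableOn (fun t => t ^ p * (ρ * Real.exp (-(lam * t)))) (Ioi (0:ℝ)) := by
    intro p hp
    have h0 : IntegrableOn (fun t : ℝ => ρ * (t ^ p * Real.exp (-(lam * t)))) (Ioi (0:ℝ)) :=
      (exp_moment_integrable hp hlam0).const_mul ρ
    exact h0.congr_fun (fun t _ => by ring) measurableSet_Ioi
  have hZval : ∀ p : ℝ, 0 ≤ p →
      ∫ t in Ioi (0:ℝ), t ^ p * (ρ * Real.exp (-(lam * t)))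
        = ρ * (Real.Gamma (p + 1) / lam ^ (p + 1)) := by
    intro p hp
    rw [show (fun t : ℝ => t ^ p * (ρ * Real.exp (-(lam * t))))
        = (fun t : ℝ => ρ * (t ^ p * Real.exp (-(lam * t)))) from funext fun t => by ring]
    rw [integral_const_mul, exp_moment_value hp hlam0]
  -- D integrability and vanishing moments
  have hDint : ∀ p : ℝ, 0 ≤ p →
      IntegrableOn (fun t => t ^ p * (g t - ρ * Real.exp (-(lam * t)))) (Ioi (0:ℝ)) := by
    intro p hp
    have h0 : IntegrableOn (fun t : ℝ => t ^ p * g t - t ^ p * (ρ * Real.exp (-(lam * t))))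
        (Ioi (0:ℝ)) := (hint p hp).sub (hZint p hp)
    exact h0.congr_fun (fun t _ => by ring) measurableSet_Ioi
  have hDmom : ∀ p : ℝ, 0 ≤ p →
      ∫ t in Ioi (0:ℝ), t ^ p * (g t - ρ * Real.exp (-(lam * t)))
        = (∫ t in Ioi (0:ℝ), t ^ p * g t) - ρ * (Real.Gamma (p + 1) / lam ^ (p + 1)) := by
    intro p hp
    have h0 : (fun t : ℝ => t ^ p * (g t - ρ * Real.exp (-(lam * t))))
        = fun t : ℝ => t ^ p * g t - t ^ p * (ρ * Real.exp (-(lam * t))) :=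
      funext fun t => by ring
    rw [h0, integral_sub (hint p hp) (hZint p hp), hZval p hp]
  have hDa : ∫ t in Ioi (0:ℝ), t ^ a * (g t - ρ * Real.exp (-(lam * t))) = 0 := by
    rw [hDmom a ha, hEa]; ring
  have hDb : ∫ t in Ioi (0:ℝ), t ^ b * (g t - ρ * Real.exp (-(lam * t))) = 0 := by
    rw [hDmom b hb, hEb]; ring
  have hkey := key_nonneg hgm hgnn hlc hρ0 hlam0 ha hac hcb hDint hDa hDb
  rw [hDmom c hc0] at hkey
  -- so Ic ≥ ρ * Gc / lam^(c+1)
  have hIcZ : ρ * (Gc / lam ^ (c + 1)) ≤ Ic := by linarith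
  -- final computation
  have hNa : Ia / Ga = ρ / lam ^ (a + 1) := by
    rw [← hEa]; field_simp
  have hNb : Ib / Gb = ρ / lam ^ (b + 1) := by
    rw [← hEb]; field_simp
  rw [hNa, hNb]
  have hprod : (ρ / lam ^ (a + 1)) ^ l * (ρ / lam ^ (b + 1)) ^ (1 - l)
      = ρ / lam ^ (c + 1) := by
    rw [Real.div_rpow hρ0.le (Real.rpow_nonneg hlam0.le _),
      Real.div_rpow hρ0.le (Real.rpow_nonneg hlam0.le _),
      ← Real.rpow_mul hlam0.le, ← Real.rpow_mul hlam0.le]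
    rw [div_mul_div_comm, ← Real.rpow_add hρ0, ← Real.rpow_add hlam0]
    rw [show l + (1 - l) = (1:ℝ) by ring, Real.rpow_one]
    congr 1
    rw [hc]; ring
  rw [hprod]
  rw [div_le_div_iff₀ (by positivity) hGc]
  calc ρ * Gc = ρ * (Gc / lam ^ (c+1)) * lam ^ (c+1) := by
        field_simp
    _ ≤ Ic * lam ^ (c + 1) :=
        mul_le_mul_of_nonneg_right hIcZ (Real.rpow_nonneg hlam0.le _)


end Helpers

set_option maxHeartbeats 1000000 in
theorem reverse_lyapunov_gamma_normalized
    {Ω : Type*} [MeasureSpace Ω] [IsProbabilityMeasure (ℙ : Measure Ω)]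
    (η : Ω → ℝ) (hηm : Measurable η) (hηpos : ∀ ω, 0 < η ω)
    (g : ℝ → ℝ) (hgnn : ∀ x, 0 ≤ g x) (hgm : Measurable g)
    (hgsupp : ∀ x : ℝ, x ≤ 0 → g x = 0)
    (hdens : Measure.map η ℙ = volume.withDensity (fun x => ENNReal.ofReal (g x)))
    (hlc : ∀ x y : ℝ, 0 < x → 0 < y → ∀ l : ℝ, 0 ≤ l → l ≤ 1 →
      g x ^ l * g y ^ (1 - l) ≤ g (l * x + (1 - l) * y))
    (L : ℝ → ℝ)
    (hL : ∀ p : ℝ, L p = (∫ ω, η ω ^ p) / Real.Gamma (p + 1)) :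
    (∀ a b l : ℝ, 0 ≤ a → 0 ≤ b → 0 ≤ l → l ≤ 1 →
      L a ^ l * L b ^ (1 - l) ≤ L (l * a + (1 - l) * b)) ∧
    (∀ a b c : ℝ, 0 ≤ c → c ≤ b → b ≤ a →
      L a ^ (b - c) * L c ^ (a - b) ≤ L b ^ (a - c)) := by
  classical
  -- normalization
  have hnorm : ∫⁻ x, ENNReal.ofReal (g x) = 1 := by
    have h1 : (Measure.map η ℙ) Set.univ = 1 := by
      rw [Measure.map_apply hηm MeasurableSet.univ]
      simp
    rw [hdens] at h1
    rw [withDensity_apply _ MeasurableSet.univ] at h1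
    simpa using h1
  -- global integrability of g
  have hgint : Integrable g volume := by
    refine ⟨hgm.aestronglyMeasurable, ?_⟩
    rw [hasFiniteIntegral_iff_norm]
    have : ∀ x, ENNReal.ofReal ‖g x‖ = ENNReal.ofReal (g x) := fun x => by
      rw [Real.norm_eq_abs, abs_of_nonneg (hgnn x)]
    simp_rw [this, hnorm]
    exact ENNReal.one_lt_top
  -- existence of a point of positivity
  obtain ⟨x₀, hx₀pos, hgx₀⟩ : ∃ x₀ : ℝ, 0 < x₀ ∧ 0 < g x₀ := by
    by_contra hcon
    push_neg at hcon
    have hzero : ∀ x : ℝ, g x = 0 := fun x => by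
      rcases le_or_gt x 0 with h | h
      · exact hgsupp x h
      · exact le_antisymm (hcon x h) (hgnn x)
    rw [show (fun x => ENNReal.ofReal (g x)) = fun _ => (0:ENNReal) from
      funext fun x => by simp [hzero x]] at hnorm
    simp at hnorm
  -- existence of a halving point
  obtain ⟨x₁, hx₁gt, hgx₁⟩ : ∃ x₁ : ℝ, x₀ < x₁ ∧ g x₁ ≤ g x₀ / 2 := by
    by_contra hcon
    push_neg at hcon
    have hlow : ∀ x ∈ Set.Ioi x₀, ENNReal.ofReal (g x₀ / 2) ≤ ENNReal.ofReal (g x) :=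
      fun x hx => ENNReal.ofReal_le_ofReal (hcon x hx).le
    have h1 : (∫⁻ x in Set.Ioi x₀, ENNReal.ofReal (g x₀ / 2)) ≤
        ∫⁻ x in Set.Ioi x₀, ENNReal.ofReal (g x) :=
      setLIntegral_mono (by measurability) hlow
    have h2 : (∫⁻ x in Set.Ioi x₀, ENNReal.ofReal (g x)) ≤ ∫⁻ x, ENNReal.ofReal (g x) :=
      setLIntegral_le_lintegral _ _
    rw [setLIntegral_const, Real.volume_Ioi, ENNReal.mul_top
      (by simp [ENNReal.ofReal_eq_zero]; linarith : ENNReal.ofReal (g x₀ / 2) ≠ 0)] at h1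
    rw [hnorm] at h2
    have := le_trans h1 h2
    simp at this
  -- integrability of all moments
  set ε : ℝ := Real.log 2 / (x₁ - x₀) with hε
  have hx10 : (0:ℝ) < x₁ - x₀ := by linarith
  have hεpos : 0 < ε := div_pos (Real.log_pos one_lt_two) hx10
  set K : ℝ := g x₀ * Real.exp (ε * x₀) with hK
  have hKnn : 0 ≤ K := by positivity
  have htail : ∀ t, x₁ < t → g t ≤ K * Real.exp (-(ε * t)) := by
    intro t ht
    have := g_tail_exp hgnn hlc hx₀pos hx₁gt hgx₀ hgx₁ ht
    rw [hK, hε]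
    convert this using 3
  have hint : ∀ p : ℝ, 0 ≤ p →
      IntegrableOn (fun t => t ^ p * g t) (Set.Ioi (0:ℝ)) := fun p hp =>
    moment_integrable hgm hgnn hgint (lt_trans hx₀pos hx₁gt) hεpos hKnn htail hp
  -- positivity of moments
  have hIpos : ∀ p : ℝ, 0 ≤ p → 0 < ∫ t in Set.Ioi (0:ℝ), t ^ p * g t := by
    intro p hp
    rcases lt_or_ge 0 (∫ t in Set.Ioi (0:ℝ), t ^ p * g t) with h | h
    · exact h
    have hnonneg : 0 ≤ ∫ t in Set.Ioi (0:ℝ), t ^ p * g t :=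
      setIntegral_nonneg measurableSet_Ioi fun t ht =>
        mul_nonneg (Real.rpow_nonneg (le_of_lt ht) p) (hgnn t)
    have hz : ∫ t in Set.Ioi (0:ℝ), t ^ p * g t = 0 := le_antisymm h hnonneg
    exfalso
    have hae : (fun t => t ^ p * g t) =ᵐ[volume.restrict (Set.Ioi 0)] 0 := by
      refine (integral_eq_zero_iff_of_nonneg_ae ?_ (hint p hp)).mp hz
      refine (ae_restrict_iff' measurableSet_Ioi).mpr ?_
      filter_upwards with t ht
      simp only [Pi.zero_apply]
      exact mul_nonneg (Real.rpow_nonneg (le_of_lt ht) p) (hgnn t)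
    have hgz : (fun t => ENNReal.ofReal (g t)) =ᵐ[volume.restrict (Set.Ioi 0)] 0 := by
      filter_upwards [hae, (ae_restrict_iff' measurableSet_Ioi).mpr
        (Filter.Eventually.of_forall (fun t (ht : t ∈ Set.Ioi (0:ℝ)) => ht))] with t h1 h2
      simp only [Pi.zero_apply] at h1 ⊢
      have ht0 : (0:ℝ) < t := h2
      have : g t = 0 :=
        (mul_eq_zero.mp h1).resolve_left (Real.rpow_pos_of_pos ht0 p).ne'
      simp [this]
    have h1 : ∫⁻ t in Set.Ioi (0:ℝ), ENNReal.ofReal (g t) = 0 := by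
      rw [lintegral_congr_ae hgz]; simp
    have h2 : ∫⁻ t in Set.Iic (0:ℝ), ENNReal.ofReal (g t) = 0 := by
      have hz2 : ∀ t ∈ Set.Iic (0:ℝ), ENNReal.ofReal (g t) = 0 := fun t ht => by
        rw [hgsupp t ht]; simp
      rw [setLIntegral_congr_fun measurableSet_Iic
        (hz2 : Set.EqOn (fun t => ENNReal.ofReal (g t)) (fun _ => 0) (Set.Iic 0))]
      simp
    have hsplit := lintegral_add_compl (fun t => ENNReal.ofReal (g t))
      (measurableSet_Iic (a := (0:ℝ))) (μ := volume)
    rw [Set.compl_Iic, h1, h2, hnorm] at hsplit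
    simp at hsplit
  -- identification of moments
  have hident : ∀ p : ℝ, 0 ≤ p →
      (∫ ω, η ω ^ p) = ∫ t in Set.Ioi (0:ℝ), t ^ p * g t := by
    intro p hp
    have hmeas : Measurable (fun x : ℝ => x ^ p) := by measurability
    have h1 : (∫ ω, η ω ^ p) = ∫ x, x ^ p ∂(Measure.map η ℙ) :=
      (integral_map hηm.aemeasurable hmeas.aestronglyMeasurable).symm
    rw [h1, hdens]
    have h2 : (fun x : ℝ => ENNReal.ofReal (g x))
        = (fun x : ℝ => ((g x).toNNReal : ENNReal)) := rfl
    rw [h2, integral_withDensity_eq_integral_smul (by measurability) (fun x : ℝ => x ^ p)]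
    have h3 : (fun x : ℝ => (g x).toNNReal • x ^ p) = fun x : ℝ => x ^ p * g x := by
      funext x
      rw [NNReal.smul_def, smul_eq_mul, Real.coe_toNNReal _ (hgnn x)]
      ring
    rw [h3]
    have h4 : ∫ t in Set.Ioi (0:ℝ), t ^ p * g t = ∫ x, x ^ p * g x :=
      setIntegral_eq_integral_of_forall_compl_eq_zero fun x hx => by
        have hx0 : x ≤ 0 := by simpa using hx
        rw [hgsupp x hx0, mul_zero]
    rw [← h4]
  -- L in terms of the density
  have hL' : ∀ p : ℝ, 0 ≤ p →
      L p = (∫ t in Set.Ioi (0:ℝ), t ^ p * g t) / Real.Gamma (p + 1) := fun p hp => by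
    rw [hL p, hident p hp]
  have hLpos : ∀ p : ℝ, 0 ≤ p → 0 < L p := fun p hp => by
    rw [hL' p hp]
    exact div_pos (hIpos p hp) (Real.Gamma_pos_of_pos (by linarith))
  -- PART 1
  have main : ∀ a b l : ℝ, 0 ≤ a → 0 ≤ b → 0 ≤ l → l ≤ 1 →
      L a ^ l * L b ^ (1 - l) ≤ L (l * a + (1 - l) * b) := by
    intro a b l ha hb hl0 hl1
    rcases eq_or_lt_of_le hl0 with hl0' | hl0'
    · -- l = 0
      rw [← hl0']
      rw [show (0:ℝ) * a + (1 - 0) * b = b by ring]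
      rw [Real.rpow_zero, one_mul, sub_zero, Real.rpow_one]
    · rcases eq_or_lt_of_le hl1 with hl1' | hl1'
      · -- l = 1
        rw [hl1']
        rw [show (1:ℝ) * a + (1 - 1) * b = a by ring]
        rw [Real.rpow_one, sub_self, Real.rpow_zero, mul_one]
      · rcases lt_trichotomy a b with hab | hab | hab
        · have h := core_ineq hgm hgnn hlc hint hIpos ha hab hl0' hl1'
          rw [hL' a ha, hL' b hb, hL' _ (by nlinarith)]
          exact h
        · -- a = b
          rw [← hab, show l * a + (1 - l) * a = a by ring,
            ← Real.rpow_add (hLpos a ha), show l + (1 - l) = (1:ℝ) by ring, Real.rpow_one]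
        · -- b < a
          have h := core_ineq hgm hgnn hlc hint hIpos (a := b) (b := a) (l := 1 - l)
            hb hab (by linarith) (by linarith)
          rw [show (1:ℝ) - (1 - l) = l by ring] at h
          rw [show (1 - l) * b + l * a = l * a + (1 - l) * b by ring] at h
          rw [hL' a ha, hL' b hb, hL' _ (by nlinarith)]
          calc ((∫ t in Set.Ioi (0:ℝ), t ^ a * g t) / Real.Gamma (a + 1)) ^ l *
                ((∫ t in Set.Ioi (0:ℝ), t ^ b * g t) / Real.Gamma (b + 1)) ^ (1 - l)
              = ((∫ t in Set.Ioi (0:ℝ), t ^ b * g t) / Real.Gamma (b + 1)) ^ (1 - l) *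
                ((∫ t in Set.Ioi (0:ℝ), t ^ a * g t) / Real.Gamma (a + 1)) ^ l := by ring
            _ ≤ _ := h
  refine ⟨main, ?_⟩
  -- PART 2
  intro a b c hc hcb hba
  rcases eq_or_lt_of_le (le_trans hcb hba) with hca | hca
  · -- c = a, hence a = b = c
    have hab : b = c := le_antisymm (hca ▸ hba) hcb
    rw [← hca, hab]
    simp [sub_self, Real.rpow_zero]
  · -- c < a
    have hacpos : (0:ℝ) < a - c := by linarith
    set l : ℝ := (b - c) / (a - c) with hldef
    have hl0 : 0 ≤ l := div_nonneg (by linarith) hacpos.le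
    have hl1 : l ≤ 1 := by
      rw [hldef, div_le_one hacpos]; linarith
    have h := main a c l (by linarith) hc hl0 hl1
    have harg : l * a + (1 - l) * c = b := by
      rw [hldef]; field_simp; ring
    rw [harg] at h
    have ha0 : 0 ≤ L a := (hLpos a (by linarith)).le
    have hc0 : 0 ≤ L c := (hLpos c hc).le
    have h2 := Real.rpow_le_rpow
      (mul_nonneg (Real.rpow_nonneg ha0 l) (Real.rpow_nonneg hc0 (1 - l))) h hacpos.le
    rw [Real.mul_rpow (Real.rpow_nonneg ha0 l) (Real.rpow_nonneg hc0 (1 - l)),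
      ← Real.rpow_mul ha0, ← Real.rpow_mul hc0] at h2
    rw [show l * (a - c) = b - c by rw [hldef]; field_simp,
      show (1 - l) * (a - c) = a - b by rw [hldef]; field_simp; ring] at h2
    exact h2
end

section
/- Let η be a positive random variable whose distribution is log-concave (i.e., whose density on (0,∞) with respect to Lebesgue measure is log-concave). Then the function p ↦ λ̂_p = E[(η/p)^p] is log-concave in p > 0; in particular, for all a ≥ b ≥ c > 0, λ̂_a^{b−c} · λ̂_c^{a−b} ≤ λ̂_b^{a−c}. -/
open MeasureTheory ProbabilityTheory Set ENNReal NNReal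

lemma vol_scale {c : ℝ} (hc : 0 < c) {K : Set ℝ} (hK : MeasurableSet K) :
    volume ((fun x => c * x) '' K) = ENNReal.ofReal c * volume K := by
  have himg : (fun x => c * x) '' K = (fun x => c⁻¹ * x) ⁻¹' K := by
    ext y
    constructor
    · rintro ⟨x, hx, rfl⟩
      simpa [inv_mul_cancel_left₀ hc.ne'] using hx
    · intro hy
      exact ⟨c⁻¹ * y, hy, by field_simp⟩
  have hmap := Real.map_volume_mul_left (inv_ne_zero hc.ne')
  have h2 := Measure.map_apply (μ := volume) (measurable_const_mul c⁻¹) hK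
  rw [himg, ← h2, hmap]
  simp [abs_of_pos hc]

lemma vol_affine {c : ℝ} (hc : 0 < c) (d : ℝ) {K : Set ℝ} (hK : MeasurableSet K) :
    volume ((fun x => c * x + d) '' K) = ENNReal.ofReal c * volume K := by
  have : (fun x => c * x + d) '' K = (fun y => y + d) '' ((fun x => c * x) '' K) := by
    rw [← Set.image_comp]; rfl
  rw [this, Set.image_add_right]
  rw [measure_preimage_add_right]
  exact vol_scale hc hK

lemma compact_bm {l : ℝ} (hl0 : 0 < l) (hl1 : l < 1) {K K' S : Set ℝ}
    (hK : IsCompact K) (hK' : IsCompact K') (hKne : K.Nonempty) (hK'ne : K'.Nonempty)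
    (hSm : MeasurableSet S)
    (hsub : ∀ x ∈ K, ∀ y ∈ K', l * x + (1 - l) * y ∈ S) :
    ENNReal.ofReal l * volume K + ENNReal.ofReal (1 - l) * volume K' ≤ volume S := by
  obtain ⟨x₀, hx₀K, hx₀max⟩ := hK.exists_isGreatest hKne
  obtain ⟨y₀, hy₀K, hy₀min⟩ := hK'.exists_isLeast hK'ne
  set P : Set ℝ := (fun x => l * x + (1 - l) * y₀) '' K with hP
  set Q : Set ℝ := (fun y => (1 - l) * y + l * x₀) '' K' with hQ
  have hPS : P ⊆ S := by rintro _ ⟨x, hx, rfl⟩; exact hsub x hx y₀ hy₀K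
  have hQS : Q ⊆ S := by
    rintro _ ⟨y, hy, rfl⟩
    have := hsub x₀ hx₀K y hy
    simpa [add_comm] using this
  have hPvol : volume P = ENNReal.ofReal l * volume K := vol_affine hl0 _ hK.measurableSet
  have hQvol : volume Q = ENNReal.ofReal (1 - l) * volume K' :=
    vol_affine (by linarith) _ hK'.measurableSet
  have hPQ : P ∩ Q ⊆ {l * x₀ + (1 - l) * y₀} := by
    rintro z ⟨⟨x, hx, rfl⟩, ⟨y, hy, hzy⟩⟩
    have h1 : l * x + (1 - l) * y₀ ≤ l * x₀ + (1 - l) * y₀ := by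
      have := hx₀max hx; nlinarith
    have h2 : l * x₀ + (1 - l) * y₀ ≤ l * x + (1 - l) * y₀ := by
      have h3 := hy₀min hy; simp only [] at hzy; nlinarith [hzy]
    simp [le_antisymm h1 h2]
  have hkey : volume P + volume Q = volume (P ∪ Q) + volume (P ∩ Q) :=
    (measure_union_add_inter P (hK'.image (by fun_prop)).measurableSet).symm
  have hnull : volume (P ∩ Q) = 0 :=
    measure_mono_null hPQ (measure_singleton _)
  calc ENNReal.ofReal l * volume K + ENNReal.ofReal (1 - l) * volume K'
      = volume P + volume Q := by rw [hPvol, hQvol]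
    _ = volume (P ∪ Q) + volume (P ∩ Q) := hkey
    _ = volume (P ∪ Q) := by rw [hnull, add_zero]
    _ ≤ volume S := measure_mono (union_subset hPS hQS)

lemma meas_bm {l : ℝ} (hl0 : 0 < l) (hl1 : l < 1) {A B S : Set ℝ}
    (hA : MeasurableSet A) (hB : MeasurableSet B) (hAne : A.Nonempty) (hBne : B.Nonempty)
    (hAfin : volume A ≠ ⊤) (hBfin : volume B ≠ ⊤) (hSm : MeasurableSet S)
    (hsub : ∀ x ∈ A, ∀ y ∈ B, l * x + (1 - l) * y ∈ S) :
    ENNReal.ofReal l * volume A + ENNReal.ofReal (1 - l) * volume B ≤ volume S := by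
  apply ENNReal.le_of_forall_pos_le_add
  intro ε hε _
  have hε2 : (ε : ℝ≥0∞) / 2 ≠ 0 := by
    simp [ENNReal.div_eq_top, (ENNReal.coe_ne_zero.2 hε.ne')]
  obtain ⟨K, hKA, hKc, hKvol⟩ := hA.exists_isCompact_lt_add hAfin hε2
  obtain ⟨K', hK'B, hK'c, hK'vol⟩ := hB.exists_isCompact_lt_add hBfin hε2
  obtain ⟨a₀, ha₀⟩ := hAne
  obtain ⟨b₀, hb₀⟩ := hBne
  set Ka := K ∪ {a₀} with hKa
  set Kb := K' ∪ {b₀} with hKb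
  have hKac : IsCompact Ka := hKc.union isCompact_singleton
  have hKbc : IsCompact Kb := hK'c.union isCompact_singleton
  have hKaA : Ka ⊆ A := union_subset hKA (by simpa using ha₀)
  have hKbB : Kb ⊆ B := union_subset hK'B (by simpa using hb₀)
  have hbm := compact_bm hl0 hl1 hKac hKbc ⟨a₀, by simp [hKa]⟩ ⟨b₀, by simp [hKb]⟩ hSm
    (fun x hx y hy => hsub x (hKaA hx) y (hKbB hy))
  have hAK : volume A ≤ volume Ka + ε / 2 :=
    le_trans hKvol.le (add_le_add_left (measure_mono subset_union_left) _)
  have hBK : volume B ≤ volume Kb + ε / 2 :=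
    le_trans hK'vol.le (add_le_add_left (measure_mono subset_union_left) _)
  have hl1' : ENNReal.ofReal l ≤ 1 := by
    rw [← ENNReal.ofReal_one]; exact ENNReal.ofReal_le_ofReal (by linarith)
  have hl2' : ENNReal.ofReal (1 - l) ≤ 1 := by
    rw [← ENNReal.ofReal_one]; exact ENNReal.ofReal_le_ofReal (by linarith)
  calc ENNReal.ofReal l * volume A + ENNReal.ofReal (1 - l) * volume B
      ≤ ENNReal.ofReal l * (volume Ka + ε / 2) + ENNReal.ofReal (1 - l) * (volume Kb + ε / 2) :=
        add_le_add (mul_le_mul_right hAK _) (mul_le_mul_right hBK _)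
    _ = (ENNReal.ofReal l * volume Ka + ENNReal.ofReal (1 - l) * volume Kb)
          + (ENNReal.ofReal l * (ε / 2) + ENNReal.ofReal (1 - l) * (ε / 2)) := by ring
    _ ≤ volume S + (1 * (ε / 2) + 1 * (ε / 2)) :=
        add_le_add hbm (add_le_add (mul_le_mul_left hl1' _) (mul_le_mul_left hl2' _))
    _ = volume S + ε := by rw [one_mul, ENNReal.add_halves]

lemma lintegral_scale_Ioi {c : ℝ} (hc : 0 < c) {ψ : ℝ → ℝ≥0∞} (hψ : Measurable ψ) :
    ∫⁻ s in Ioi (0:ℝ), ψ s = ENNReal.ofReal c * ∫⁻ u in Ioi (0:ℝ), ψ (c * u) := by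
  have hpre : (fun u : ℝ => c * u) ⁻¹' (Ioi 0) = Ioi 0 := by
    ext u; simp [mem_preimage, mul_pos_iff_of_pos_left, hc]
  have hmapr : Measure.map (fun u : ℝ => c * u) (volume.restrict (Ioi 0))
      = ENNReal.ofReal c⁻¹ • volume.restrict (Ioi 0) := by
    calc Measure.map (fun u : ℝ => c * u) (volume.restrict (Ioi 0))
        = Measure.map (fun u : ℝ => c * u) (volume.restrict ((fun u : ℝ => c * u) ⁻¹' (Ioi 0))) := by
          rw [hpre]
      _ = (Measure.map (fun u : ℝ => c * u) volume).restrict (Ioi 0) :=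
          (Measure.restrict_map (measurable_const_mul c) measurableSet_Ioi).symm
      _ = ENNReal.ofReal c⁻¹ • volume.restrict (Ioi 0) := by
          rw [Real.map_volume_mul_left hc.ne', abs_of_pos (inv_pos.2 hc), Measure.restrict_smul]
  have h1 : ∫⁻ u in Ioi (0:ℝ), ψ (c * u)
      = ENNReal.ofReal c⁻¹ * ∫⁻ s in Ioi (0:ℝ), ψ s := by
    rw [← lintegral_map hψ (measurable_const_mul c), hmapr, lintegral_smul_measure, smul_eq_mul]
  rw [h1, ← mul_assoc, ← ENNReal.ofReal_mul hc.le, mul_inv_cancel₀ hc.ne', ENNReal.ofReal_one,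
    one_mul]

lemma ennreal_amgm {l : ℝ} (hl0 : 0 ≤ l) (hl1 : l ≤ 1) {X Y : ℝ≥0∞}
    (hX : X ≠ ⊤) (hY : Y ≠ ⊤) :
    X ^ l * Y ^ (1 - l) ≤ ENNReal.ofReal l * X + ENNReal.ofReal (1 - l) * Y := by
  lift X to ℝ≥0 using hX
  lift Y to ℝ≥0 using hY
  have key := NNReal.geom_mean_le_arith_mean2_weighted (w₁ := l.toNNReal)
    (w₂ := (1 - l).toNNReal) (p₁ := X) (p₂ := Y) ?_
  · have hc : ((l.toNNReal * X + (1 - l).toNNReal * Y : ℝ≥0) : ℝ≥0∞)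
        = ENNReal.ofReal l * X + ENNReal.ofReal (1 - l) * Y := by
      push_cast
      rw [ENNReal.ofReal, ENNReal.ofReal]
    calc (X : ℝ≥0∞) ^ l * (Y : ℝ≥0∞) ^ (1 - l)
        = ((X ^ l * Y ^ (1 - l) : ℝ≥0) : ℝ≥0∞) := by
          rw [ENNReal.coe_mul, ENNReal.coe_rpow_of_nonneg _ hl0,
            ENNReal.coe_rpow_of_nonneg _ (by linarith)]
      _ ≤ ((l.toNNReal * X + (1 - l).toNNReal * Y : ℝ≥0) : ℝ≥0∞) := by
          rw [show (l.toNNReal : ℝ) = l from Real.coe_toNNReal l hl0,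
            show ((1 - l).toNNReal : ℝ) = 1 - l from Real.coe_toNNReal _ (by linarith)] at key
          exact_mod_cast key
      _ = _ := hc
  · have : l.toNNReal + (1 - l).toNNReal = (1 : ℝ).toNNReal := by
      rw [← Real.toNNReal_add hl0 (by linarith)]
      norm_num
    simpa using this

lemma pl_bounded {l : ℝ} (hl0 : 0 < l) (hl1 : l < 1) {n : ℝ} (hn : 0 < n)
    {f g h : ℝ → ℝ} (hf : Measurable f) (hg : Measurable g) (hh : Measurable h)
    (hf0 : ∀ x, 0 ≤ f x) (hg0 : ∀ x, 0 ≤ g x) (hh0 : ∀ x, 0 ≤ h x)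
    (hfb : ∀ x, f x ≤ n) (hgb : ∀ x, g x ≤ n)
    (hfs : ∀ x, x ∉ Icc (-n) n → f x = 0) (hgs : ∀ x, x ∉ Icc (-n) n → g x = 0)
    (hyp : ∀ x y : ℝ, f x ^ l * g y ^ (1 - l) ≤ h (l * x + (1 - l) * y)) :
    (∫⁻ x, ENNReal.ofReal (f x)) ^ l * (∫⁻ x, ENNReal.ofReal (g x)) ^ (1 - l)
      ≤ ∫⁻ x, ENNReal.ofReal (h x) := by
  set F := ∫⁻ x, ENNReal.ofReal (f x) with hF
  set G := ∫⁻ x, ENNReal.ofReal (g x) with hG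
  by_cases hF0 : F = 0
  · rw [hF0, ENNReal.zero_rpow_of_pos hl0, zero_mul]; exact zero_le
  by_cases hG0 : G = 0
  · rw [hG0, ENNReal.zero_rpow_of_pos (by linarith : (0:ℝ) < 1 - l), mul_zero]; exact zero_le
  -- positivity of sups
  have hfex : ∃ x, 0 < f x := by
    by_contra hcon
    push_neg at hcon
    exact hF0 (by
      rw [hF]
      have : ∀ x, ENNReal.ofReal (f x) = 0 := fun x => by
        simp [le_antisymm (hcon x) (hf0 x)]
      simp [this])
  have hgex : ∃ x, 0 < g x := by
    by_contra hcon
    push_neg at hcon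
    exact hG0 (by
      rw [hG]
      have : ∀ x, ENNReal.ofReal (g x) = 0 := fun x => by
        simp [le_antisymm (hcon x) (hg0 x)]
      simp [this])
  have hbddf : BddAbove (Set.range f) := ⟨n, by rintro _ ⟨x, rfl⟩; exact hfb x⟩
  have hbddg : BddAbove (Set.range g) := ⟨n, by rintro _ ⟨x, rfl⟩; exact hgb x⟩
  set Mf := ⨆ x, f x with hMf
  set Mg := ⨆ x, g x with hMg
  obtain ⟨xf, hxf⟩ := hfex
  obtain ⟨xg, hxg⟩ := hgex
  have hMfpos : 0 < Mf := lt_of_lt_of_le hxf (le_ciSup hbddf xf)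
  have hMgpos : 0 < Mg := lt_of_lt_of_le hxg (le_ciSup hbddg xg)
  have hMfle : ∀ x, f x ≤ Mf := fun x => le_ciSup hbddf x
  have hMgle : ∀ x, g x ≤ Mg := fun x => le_ciSup hbddg x
  set c := Mf ^ l * Mg ^ (1 - l) with hc
  have hcpos : 0 < c := mul_pos (Real.rpow_pos_of_pos hMfpos _) (Real.rpow_pos_of_pos hMgpos _)
  -- level-set measure functions
  set ψf : ℝ → ℝ≥0∞ := fun s => volume {x | s < f x} with hψf
  set ψg : ℝ → ℝ≥0∞ := fun s => volume {x | s < g x} with hψg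
  set ψh : ℝ → ℝ≥0∞ := fun s => volume {x | s < h x} with hψh
  have hanti : ∀ k : ℝ → ℝ, Antitone (fun s => volume {x | s < k x}) := by
    intro k s t hst
    exact measure_mono (fun x hx => lt_of_le_of_lt hst hx)
  have hψfm : Measurable ψf := (hanti f).measurable
  have hψgm : Measurable ψg := (hanti g).measurable
  have hψhm : Measurable ψh := (hanti h).measurable
  -- layer cake
  have hFlc : F = ∫⁻ s in Ioi (0:ℝ), ψf s :=
    lintegral_eq_lintegral_meas_lt volume (ae_of_all _ hf0) hf.aemeasurable
  have hGlc : G = ∫⁻ s in Ioi (0:ℝ), ψg s :=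
    lintegral_eq_lintegral_meas_lt volume (ae_of_all _ hg0) hg.aemeasurable
  have hHlc : (∫⁻ x, ENNReal.ofReal (h x)) = ∫⁻ s in Ioi (0:ℝ), ψh s :=
    lintegral_eq_lintegral_meas_lt volume (ae_of_all _ hh0) hh.aemeasurable
  -- key pointwise estimate on (0,1)
  have hkey : ∀ t ∈ Ioo (0:ℝ) 1,
      ENNReal.ofReal l * ψf (Mf * t) + ENNReal.ofReal (1 - l) * ψg (Mg * t) ≤ ψh (c * t) := by
    rintro t ⟨ht0, ht1⟩
    set A := {x | Mf * t < f x} with hA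
    set B := {y | Mg * t < g y} with hB
    have hAm : MeasurableSet A := measurableSet_lt measurable_const hf
    have hBm : MeasurableSet B := measurableSet_lt measurable_const hg
    have hSm : MeasurableSet {z | c * t < h z} := measurableSet_lt measurable_const hh
    have hAne : A.Nonempty := by
      have hlt : Mf * t < ⨆ x, f x := by rw [← hMf]; nlinarith
      obtain ⟨x, hx⟩ := exists_lt_of_lt_ciSup hlt
      exact ⟨x, hx⟩
    have hBne : B.Nonempty := by
      have hlt : Mg * t < ⨆ x, g x := by rw [← hMg]; nlinarith
      obtain ⟨y, hy⟩ := exists_lt_of_lt_ciSup hlt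
      exact ⟨y, hy⟩
    have hAsub : A ⊆ Icc (-n) n := by
      intro x hx
      by_contra hxn
      have hx' : Mf * t < f x := hx
      rw [hfs x hxn] at hx'
      exact absurd hx' (not_lt.2 (by positivity))
    have hBsub : B ⊆ Icc (-n) n := by
      intro y hy
      by_contra hyn
      have hy' : Mg * t < g y := hy
      rw [hgs y hyn] at hy'
      exact absurd hy' (not_lt.2 (by positivity))
    have hAfin : volume A ≠ ⊤ :=
      ne_top_of_le_ne_top (by simp) (measure_mono hAsub)
    have hBfin : volume B ≠ ⊤ :=
      ne_top_of_le_ne_top (by simp) (measure_mono hBsub)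
    have hsub : ∀ x ∈ A, ∀ y ∈ B, l * x + (1 - l) * y ∈ {z | c * t < h z} := by
      intro x hx y hy
      have hx' : Mf * t < f x := hx
      have hy' : Mg * t < g y := hy
      have h1 : (Mf * t) ^ l < f x ^ l :=
        Real.rpow_lt_rpow (by positivity) hx' hl0
      have h2 : (Mg * t) ^ (1 - l) < g y ^ (1 - l) :=
        Real.rpow_lt_rpow (by positivity) hy' (by linarith)
      have h3 : (Mf * t) ^ l * (Mg * t) ^ (1 - l) < f x ^ l * g y ^ (1 - l) :=
        mul_lt_mul'' h1 h2 (by positivity) (by positivity)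
      have h4 : (Mf * t) ^ l * (Mg * t) ^ (1 - l) = c * t := by
        rw [Real.mul_rpow hMfpos.le ht0.le, Real.mul_rpow hMgpos.le ht0.le, hc]
        rw [show Mf ^ l * t ^ l * (Mg ^ (1 - l) * t ^ (1 - l))
            = Mf ^ l * Mg ^ (1 - l) * (t ^ l * t ^ (1 - l)) by ring]
        rw [← Real.rpow_add ht0]
        norm_num
      show c * t < h (l * x + (1 - l) * y)
      calc c * t = (Mf * t) ^ l * (Mg * t) ^ (1 - l) := h4.symm
        _ < f x ^ l * g y ^ (1 - l) := h3
        _ ≤ h (l * x + (1 - l) * y) := hyp x y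
    exact meas_bm hl0 hl1 hAm hBm hAne hBne hAfin hBfin hSm hsub
  -- tail vanishing
  have htailf : ∀ t : ℝ, 1 ≤ t → ψf (Mf * t) = 0 := by
    intro t ht
    have : {x | Mf * t < f x} = ∅ := by
      ext x
      simp only [mem_setOf_eq, mem_empty_iff_false, iff_false, not_lt]
      calc f x ≤ Mf := hMfle x
        _ = Mf * 1 := by ring
        _ ≤ Mf * t := by nlinarith
    simp [hψf, this]
  have htailg : ∀ t : ℝ, 1 ≤ t → ψg (Mg * t) = 0 := by
    intro t ht
    have : {x | Mg * t < g x} = ∅ := by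
      ext x
      simp only [mem_setOf_eq, mem_empty_iff_false, iff_false, not_lt]
      calc g x ≤ Mg := hMgle x
        _ = Mg * 1 := by ring
        _ ≤ Mg * t := by nlinarith
    simp [hψg, this]
  -- splitting Ioi 0 = Ioo 0 1 ∪ Ici 1
  have hIoi : Ioi (0:ℝ) = Ioo 0 1 ∪ Ici 1 := by
    ext x
    simp only [mem_Ioi, mem_union, mem_Ioo, mem_Ici]
    constructor
    · intro hx
      rcases lt_or_ge x 1 with h | h
      · exact Or.inl ⟨hx, h⟩
      · exact Or.inr h
    · rintro (⟨h1, _⟩ | h1) <;> linarith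
  have hdisj : Disjoint (Ioo (0:ℝ) 1) (Ici 1) := by
    rw [Set.disjoint_left]
    rintro x ⟨_, hx1⟩ hx1'
    exact absurd hx1' (not_le.2 hx1)
  have hsplitf : ∫⁻ t in Ioi (0:ℝ), ψf (Mf * t) = ∫⁻ t in Ioo (0:ℝ) 1, ψf (Mf * t) := by
    rw [hIoi, lintegral_union measurableSet_Ici hdisj]
    have : ∫⁻ t in Ici (1:ℝ), ψf (Mf * t) = 0 := by
      rw [← lintegral_zero (μ := volume.restrict (Ici (1:ℝ)))]
      apply setLIntegral_congr_fun measurableSet_Ici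
      exact fun t ht => htailf t ht
    rw [this, add_zero]
  have hsplitg : ∫⁻ t in Ioi (0:ℝ), ψg (Mg * t) = ∫⁻ t in Ioo (0:ℝ) 1, ψg (Mg * t) := by
    rw [hIoi, lintegral_union measurableSet_Ici hdisj]
    have : ∫⁻ t in Ici (1:ℝ), ψg (Mg * t) = 0 := by
      rw [← lintegral_zero (μ := volume.restrict (Ici (1:ℝ)))]
      apply setLIntegral_congr_fun measurableSet_Ici
      exact fun t ht => htailg t ht
    rw [this, add_zero]
  -- measurability of composed maps
  have hmf : Measurable fun t : ℝ => ψf (Mf * t) := hψfm.comp (measurable_const_mul Mf)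
  have hmg : Measurable fun t : ℝ => ψg (Mg * t) := hψgm.comp (measurable_const_mul Mg)
  have hmh : Measurable fun t : ℝ => ψh (c * t) := hψhm.comp (measurable_const_mul c)
  have hFX : F = ENNReal.ofReal Mf * ∫⁻ t in Ioi (0:ℝ), ψf (Mf * t) := by
    rw [hFlc]; exact lintegral_scale_Ioi hMfpos hψfm
  have hGY : G = ENNReal.ofReal Mg * ∫⁻ t in Ioi (0:ℝ), ψg (Mg * t) := by
    rw [hGlc]; exact lintegral_scale_Ioi hMgpos hψgm
  -- F, G finite hence X, Y finite
  have hFfin : F ≠ ⊤ := by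
    rw [hF]
    have hle : ∀ x, ENNReal.ofReal (f x) ≤ (Icc (-n) n).indicator (fun _ => ENNReal.ofReal n) x := by
      intro x
      by_cases hx : x ∈ Icc (-n) n
      · rw [indicator_of_mem hx]; exact ENNReal.ofReal_le_ofReal (hfb x)
      · rw [indicator_of_notMem hx, hfs x hx]; simp
    refine ne_top_of_le_ne_top ?_ (lintegral_mono hle)
    rw [lintegral_indicator measurableSet_Icc, setLIntegral_const]
    simp [ENNReal.mul_ne_top]
  have hGfin : G ≠ ⊤ := by
    rw [hG]
    have hle : ∀ x, ENNReal.ofReal (g x) ≤ (Icc (-n) n).indicator (fun _ => ENNReal.ofReal n) x := by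
      intro x
      by_cases hx : x ∈ Icc (-n) n
      · rw [indicator_of_mem hx]; exact ENNReal.ofReal_le_ofReal (hgb x)
      · rw [indicator_of_notMem hx, hgs x hx]; simp
    refine ne_top_of_le_ne_top ?_ (lintegral_mono hle)
    rw [lintegral_indicator measurableSet_Icc, setLIntegral_const]
    simp [ENNReal.mul_ne_top]
  have hXfin : (∫⁻ t in Ioi (0:ℝ), ψf (Mf * t)) ≠ ⊤ := by
    intro hXtop
    rw [hFX, hXtop, ENNReal.mul_top (by simpa using hMfpos)] at hFfin
    exact hFfin rfl
  have hYfin : (∫⁻ t in Ioi (0:ℝ), ψg (Mg * t)) ≠ ⊤ := by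
    intro hYtop
    rw [hGY, hYtop, ENNReal.mul_top (by simpa using hMgpos)] at hGfin
    exact hGfin rfl
  -- main chain
  have hchain : ENNReal.ofReal c *
        ((ENNReal.ofReal l * ∫⁻ t in Ioi (0:ℝ), ψf (Mf * t))
          + ENNReal.ofReal (1 - l) * ∫⁻ t in Ioi (0:ℝ), ψg (Mg * t))
      ≤ ∫⁻ x, ENNReal.ofReal (h x) := by
    rw [hHlc, lintegral_scale_Ioi hcpos hψhm]
    apply mul_le_mul_right
    calc (ENNReal.ofReal l * ∫⁻ t in Ioi (0:ℝ), ψf (Mf * t))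
          + ENNReal.ofReal (1 - l) * ∫⁻ t in Ioi (0:ℝ), ψg (Mg * t)
        = (ENNReal.ofReal l * ∫⁻ t in Ioo (0:ℝ) 1, ψf (Mf * t))
          + ENNReal.ofReal (1 - l) * ∫⁻ t in Ioo (0:ℝ) 1, ψg (Mg * t) := by
          rw [hsplitf, hsplitg]
      _ = ∫⁻ t in Ioo (0:ℝ) 1,
            (ENNReal.ofReal l * ψf (Mf * t) + ENNReal.ofReal (1 - l) * ψg (Mg * t)) := by
          rw [lintegral_add_left (hmf.const_mul _), lintegral_const_mul _ hmf,
            lintegral_const_mul _ hmg]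
      _ ≤ ∫⁻ t in Ioo (0:ℝ) 1, ψh (c * t) := setLIntegral_mono hmh hkey
      _ ≤ ∫⁻ t in Ioi (0:ℝ), ψh (c * t) := lintegral_mono_set (fun t ht => ht.1)
  -- combine with AM-GM
  calc F ^ l * G ^ (1 - l)
      = (ENNReal.ofReal Mf) ^ l * (ENNReal.ofReal Mg) ^ (1 - l)
          * ((∫⁻ t in Ioi (0:ℝ), ψf (Mf * t)) ^ l
            * (∫⁻ t in Ioi (0:ℝ), ψg (Mg * t)) ^ (1 - l)) := by
        rw [hFX, hGY, ENNReal.mul_rpow_of_nonneg _ _ hl0.le,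
          ENNReal.mul_rpow_of_nonneg _ _ (by linarith : (0:ℝ) ≤ 1 - l)]
        ring
    _ ≤ (ENNReal.ofReal Mf) ^ l * (ENNReal.ofReal Mg) ^ (1 - l)
          * ((ENNReal.ofReal l * ∫⁻ t in Ioi (0:ℝ), ψf (Mf * t))
            + ENNReal.ofReal (1 - l) * ∫⁻ t in Ioi (0:ℝ), ψg (Mg * t)) :=
        mul_le_mul_right (ennreal_amgm hl0.le hl1.le hXfin hYfin) _
    _ = ENNReal.ofReal c *
          ((ENNReal.ofReal l * ∫⁻ t in Ioi (0:ℝ), ψf (Mf * t))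
            + ENNReal.ofReal (1 - l) * ∫⁻ t in Ioi (0:ℝ), ψg (Mg * t)) := by
        rw [hc, ENNReal.ofReal_mul (by positivity),
          ← ENNReal.ofReal_rpow_of_pos hMfpos, ← ENNReal.ofReal_rpow_of_pos hMgpos]
    _ ≤ ∫⁻ x, ENNReal.ofReal (h x) := hchain

lemma pl_general {l : ℝ} (hl0 : 0 < l) (hl1 : l < 1)
    {f g h : ℝ → ℝ} (hf : Measurable f) (hg : Measurable g) (hh : Measurable h)
    (hf0 : ∀ x, 0 ≤ f x) (hg0 : ∀ x, 0 ≤ g x) (hh0 : ∀ x, 0 ≤ h x)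
    (hyp : ∀ x y : ℝ, f x ^ l * g y ^ (1 - l) ≤ h (l * x + (1 - l) * y)) :
    (∫⁻ x, ENNReal.ofReal (f x)) ^ l * (∫⁻ x, ENNReal.ofReal (g x)) ^ (1 - l)
      ≤ ∫⁻ x, ENNReal.ofReal (h x) := by
  by_cases hF0 : (∫⁻ x, ENNReal.ofReal (f x)) = 0
  · rw [hF0, ENNReal.zero_rpow_of_pos hl0, zero_mul]; exact zero_le
  by_cases hG0 : (∫⁻ x, ENNReal.ofReal (g x)) = 0
  · rw [hG0, ENNReal.zero_rpow_of_pos (by linarith : (0:ℝ) < 1 - l), mul_zero]; exact zero_le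
  -- truncations
  set fn : ℕ → ℝ → ℝ :=
    fun k x => if x ∈ Icc (-((k:ℝ)+1)) ((k:ℝ)+1) then min (f x) ((k:ℝ)+1) else 0 with hfn
  set gn : ℕ → ℝ → ℝ :=
    fun k x => if x ∈ Icc (-((k:ℝ)+1)) ((k:ℝ)+1) then min (g x) ((k:ℝ)+1) else 0 with hgn
  have hfn_m : ∀ k, Measurable (fn k) := fun k =>
    Measurable.ite measurableSet_Icc (hf.min measurable_const) measurable_const
  have hgn_m : ∀ k, Measurable (gn k) := fun k =>
    Measurable.ite measurableSet_Icc (hg.min measurable_const) measurable_const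
  have hfn_0 : ∀ k x, 0 ≤ fn k x := by
    intro k x
    rw [hfn]
    dsimp only
    split
    · exact le_min (hf0 x) (by positivity)
    · exact le_refl 0
  have hgn_0 : ∀ k x, 0 ≤ gn k x := by
    intro k x
    rw [hgn]
    dsimp only
    split
    · exact le_min (hg0 x) (by positivity)
    · exact le_refl 0
  have hfn_le : ∀ k x, fn k x ≤ f x := by
    intro k x
    rw [hfn]
    dsimp only
    split
    · exact min_le_left _ _
    · exact hf0 x
  have hgn_le : ∀ k x, gn k x ≤ g x := by
    intro k x
    rw [hgn]
    dsimp only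
    split
    · exact min_le_left _ _
    · exact hg0 x
  have hIccmono : ∀ (j k : ℕ), j ≤ k → ∀ x : ℝ, x ∈ Icc (-((j:ℝ)+1)) ((j:ℝ)+1) →
      x ∈ Icc (-((k:ℝ)+1)) ((k:ℝ)+1) := by
    intro j k hjk x hx
    have : (j:ℝ) ≤ (k:ℝ) := Nat.cast_le.2 hjk
    exact ⟨by linarith [hx.1], by linarith [hx.2]⟩
  have hfn_mono : ∀ (j k : ℕ), j ≤ k → ∀ x, fn j x ≤ fn k x := by
    intro j k hjk x
    rw [hfn]
    dsimp only
    by_cases hxj : x ∈ Icc (-((j:ℝ)+1)) ((j:ℝ)+1)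
    · rw [if_pos hxj, if_pos (hIccmono j k hjk x hxj)]
      have : (j:ℝ) ≤ (k:ℝ) := Nat.cast_le.2 hjk
      exact min_le_min le_rfl (by linarith)
    · rw [if_neg hxj]
      split
      · exact le_min (hf0 x) (by positivity)
      · exact le_refl 0
  have hgn_mono : ∀ (j k : ℕ), j ≤ k → ∀ x, gn j x ≤ gn k x := by
    intro j k hjk x
    rw [hgn]
    dsimp only
    by_cases hxj : x ∈ Icc (-((j:ℝ)+1)) ((j:ℝ)+1)
    · rw [if_pos hxj, if_pos (hIccmono j k hjk x hxj)]
      have : (j:ℝ) ≤ (k:ℝ) := Nat.cast_le.2 hjk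
      exact min_le_min le_rfl (by linarith)
    · rw [if_neg hxj]
      split
      · exact le_min (hg0 x) (by positivity)
      · exact le_refl 0
  have hsupf : ∀ x, (⨆ k, ENNReal.ofReal (fn k x)) = ENNReal.ofReal (f x) := by
    intro x
    apply le_antisymm
    · exact iSup_le fun k => ENNReal.ofReal_le_ofReal (hfn_le k x)
    · obtain ⟨N, hN⟩ := exists_nat_ge (max |x| (f x))
      have hfeq : fn N x = f x := by
        rw [hfn]
        dsimp only
        have hx : x ∈ Icc (-((N:ℝ)+1)) ((N:ℝ)+1) := by
          have h1 : |x| ≤ (N:ℝ) := le_trans (le_max_left _ _) hN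
          have := abs_le.1 h1
          exact ⟨by linarith [this.1], by linarith [this.2]⟩
        rw [if_pos hx]
        exact min_eq_left (by linarith [le_trans (le_max_right |x| (f x)) hN])
      calc ENNReal.ofReal (f x) = ENNReal.ofReal (fn N x) := by rw [hfeq]
        _ ≤ ⨆ k, ENNReal.ofReal (fn k x) := le_iSup (fun k => ENNReal.ofReal (fn k x)) N
  have hsupg : ∀ x, (⨆ k, ENNReal.ofReal (gn k x)) = ENNReal.ofReal (g x) := by
    intro x
    apply le_antisymm
    · exact iSup_le fun k => ENNReal.ofReal_le_ofReal (hgn_le k x)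
    · obtain ⟨N, hN⟩ := exists_nat_ge (max |x| (g x))
      have hgeq : gn N x = g x := by
        rw [hgn]
        dsimp only
        have hx : x ∈ Icc (-((N:ℝ)+1)) ((N:ℝ)+1) := by
          have h1 : |x| ≤ (N:ℝ) := le_trans (le_max_left _ _) hN
          have := abs_le.1 h1
          exact ⟨by linarith [this.1], by linarith [this.2]⟩
        rw [if_pos hx]
        exact min_eq_left (by linarith [le_trans (le_max_right |x| (g x)) hN])
      calc ENNReal.ofReal (g x) = ENNReal.ofReal (gn N x) := by rw [hgeq]
        _ ≤ ⨆ k, ENNReal.ofReal (gn k x) := le_iSup (fun k => ENNReal.ofReal (gn k x)) N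
  -- monotone convergence
  have hFsup : (⨆ k, ∫⁻ x, ENNReal.ofReal (fn k x)) = ∫⁻ x, ENNReal.ofReal (f x) := by
    rw [← lintegral_iSup (fun k => (hfn_m k).ennreal_ofReal)
      (fun j k hjk x => ENNReal.ofReal_le_ofReal (hfn_mono j k hjk x))]
    exact lintegral_congr fun x => hsupf x
  have hGsup : (⨆ k, ∫⁻ x, ENNReal.ofReal (gn k x)) = ∫⁻ x, ENNReal.ofReal (g x) := by
    rw [← lintegral_iSup (fun k => (hgn_m k).ennreal_ofReal)
      (fun j k hjk x => ENNReal.ofReal_le_ofReal (hgn_mono j k hjk x))]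
    exact lintegral_congr fun x => hsupg x
  have hFmono : Monotone fun k => ∫⁻ x, ENNReal.ofReal (fn k x) :=
    fun j k hjk => lintegral_mono fun x => ENNReal.ofReal_le_ofReal (hfn_mono j k hjk x)
  have hGmono : Monotone fun k => ∫⁻ x, ENNReal.ofReal (gn k x) :=
    fun j k hjk => lintegral_mono fun x => ENNReal.ofReal_le_ofReal (hgn_mono j k hjk x)
  have hFt : Filter.Tendsto (fun k => ∫⁻ x, ENNReal.ofReal (fn k x)) Filter.atTop
      (nhds (∫⁻ x, ENNReal.ofReal (f x))) := by
    rw [← hFsup]; exact tendsto_atTop_iSup hFmono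
  have hGt : Filter.Tendsto (fun k => ∫⁻ x, ENNReal.ofReal (gn k x)) Filter.atTop
      (nhds (∫⁻ x, ENNReal.ofReal (g x))) := by
    rw [← hGsup]; exact tendsto_atTop_iSup hGmono
  -- per-k bound from pl_bounded
  have hbound : ∀ k : ℕ, (∫⁻ x, ENNReal.ofReal (fn k x)) ^ l
      * (∫⁻ x, ENNReal.ofReal (gn k x)) ^ (1 - l) ≤ ∫⁻ x, ENNReal.ofReal (h x) := by
    intro k
    apply pl_bounded hl0 hl1 (show (0:ℝ) < (k:ℝ)+1 by positivity) (hfn_m k) (hgn_m k) hh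
      (hfn_0 k) (hgn_0 k) hh0
    · intro x
      rw [hfn]; dsimp only
      split
      · exact min_le_right _ _
      · positivity
    · intro x
      rw [hgn]; dsimp only
      split
      · exact min_le_right _ _
      · positivity
    · intro x hx
      rw [hfn]; dsimp only; rw [if_neg hx]
    · intro x hx
      rw [hgn]; dsimp only; rw [if_neg hx]
    · intro x y
      calc fn k x ^ l * gn k y ^ (1 - l)
          ≤ f x ^ l * g y ^ (1 - l) :=
            mul_le_mul (Real.rpow_le_rpow (hfn_0 k x) (hfn_le k x) hl0.le)
              (Real.rpow_le_rpow (hgn_0 k y) (hgn_le k y) (by linarith))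
              (Real.rpow_nonneg (hgn_0 k y) _) (Real.rpow_nonneg (hf0 x) _)
        _ ≤ h (l * x + (1 - l) * y) := hyp x y
  -- pass to the limit
  have hl' : (∫⁻ x, ENNReal.ofReal (f x)) ^ l ≠ 0 := by
    simp [ENNReal.rpow_eq_zero_iff, hF0, not_lt.2 hl0.le]
  have hg' : (∫⁻ x, ENNReal.ofReal (g x)) ^ (1 - l) ≠ 0 := by
    simp [ENNReal.rpow_eq_zero_iff, hG0, not_lt.2 (by linarith : (0:ℝ) ≤ 1 - l)]
  have ht1 : Filter.Tendsto (fun k => (∫⁻ x, ENNReal.ofReal (fn k x)) ^ l) Filter.atTop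
      (nhds ((∫⁻ x, ENNReal.ofReal (f x)) ^ l)) :=
    (ENNReal.continuous_rpow_const.tendsto _).comp hFt
  have ht2 : Filter.Tendsto (fun k => (∫⁻ x, ENNReal.ofReal (gn k x)) ^ (1 - l)) Filter.atTop
      (nhds ((∫⁻ x, ENNReal.ofReal (g x)) ^ (1 - l))) :=
    (ENNReal.continuous_rpow_const.tendsto _).comp hGt
  have hprod := ENNReal.Tendsto.mul ht1 (Or.inl hl') ht2 (Or.inl hg')
  exact le_of_tendsto hprod (Filter.Eventually.of_forall hbound)

theorem reverse_lyapunov_power_normalized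
    {Ω : Type*} [MeasureSpace Ω] [IsProbabilityMeasure (ℙ : Measure Ω)]
    (η : Ω → ℝ) (hηm : Measurable η) (hηpos : ∀ ω, 0 < η ω)
    (g : ℝ → ℝ) (hgnn : ∀ x, 0 ≤ g x) (hgm : Measurable g)
    (hgsupp : ∀ x : ℝ, x ≤ 0 → g x = 0)
    (hdens : Measure.map η ℙ = volume.withDensity (fun x => ENNReal.ofReal (g x)))
    (hlc : ∀ x y : ℝ, 0 < x → 0 < y → ∀ l : ℝ, 0 ≤ l → l ≤ 1 →
      g x ^ l * g y ^ (1 - l) ≤ g (l * x + (1 - l) * y))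
    (L : ℝ → ℝ)
    (hL : ∀ p : ℝ, L p = ∫ ω, (η ω / p) ^ p) :
    (∀ a b l : ℝ, 0 < a → 0 < b → 0 ≤ l → l ≤ 1 →
      L a ^ l * L b ^ (1 - l) ≤ L (l * a + (1 - l) * b)) ∧
    (∀ a b c : ℝ, 0 < c → c ≤ b → b ≤ a →
      L a ^ (b - c) * L c ^ (a - b) ≤ L b ^ (a - c)) := by
  -- the density-weighted integrand
  set f : ℝ → ℝ → ℝ := fun p x => g x * (x / p) ^ p with hfdef
  have hfm : ∀ p : ℝ, Measurable (f p) := by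
    intro p
    exact hgm.mul ((measurable_id.div_const p).pow measurable_const)
  have hfnn : ∀ p : ℝ, 0 < p → ∀ x : ℝ, 0 ≤ f p x := by
    intro p hp x
    rcases le_or_gt x 0 with hx | hx
    · simp [hfdef, hgsupp x hx]
    · exact mul_nonneg (hgnn x) (Real.rpow_nonneg (by positivity) _)
  -- representation L p = (I p).toReal
  set I : ℝ → ℝ≥0∞ := fun p => ∫⁻ x, ENNReal.ofReal (f p x) with hIdef
  have hLrep : ∀ p : ℝ, 0 < p → L p = (I p).toReal := by
    intro p hp
    have hφ : Measurable fun x : ℝ => (x / p) ^ p :=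
      (measurable_id.div_const p).pow measurable_const
    have h1 : L p = ∫ x, (x / p) ^ p ∂(Measure.map η ℙ) := by
      rw [hL p, integral_map hηm.aemeasurable hφ.aestronglyMeasurable]
    have h2 : L p = ∫ x, f p x := by
      rw [h1, hdens]
      have : (fun x : ℝ => ENNReal.ofReal (g x))
          = fun x : ℝ => ((g x).toNNReal : ℝ≥0∞) := rfl
      rw [this, integral_withDensity_eq_integral_smul
        (by exact measurable_real_toNNReal.comp hgm) _]
      apply integral_congr_ae
      apply ae_of_all
      intro x
      rw [hfdef]
      simp only [NNReal.smul_def, smul_eq_mul]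
      rw [Real.coe_toNNReal _ (hgnn x)]
    rw [h2, integral_eq_lintegral_of_nonneg_ae (ae_of_all _ (hfnn p hp))
      (hfm p).aestronglyMeasurable]
  have hLnn : ∀ p : ℝ, 0 < p → 0 ≤ L p := fun p hp => by
    rw [hLrep p hp]; exact ENNReal.toReal_nonneg
  -- main log-concavity statement
  have main : ∀ a b l : ℝ, 0 < a → 0 < b → 0 ≤ l → l ≤ 1 →
      L a ^ l * L b ^ (1 - l) ≤ L (l * a + (1 - l) * b) := by
    intro a b l ha hb hl0 hl1
    rcases eq_or_lt_of_le hl0 with hl0' | hl0'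
    · rw [← hl0']
      norm_num
    rcases eq_or_lt_of_le hl1 with hl1' | hl1'
    · rw [hl1']
      norm_num
    set p := l * a + (1 - l) * b with hp
    have hppos : 0 < p := by nlinarith
    -- pointwise Prékopa-Leindler hypothesis
    have hpoint : ∀ x y : ℝ, f a x ^ l * f b y ^ (1 - l) ≤ f p (l * x + (1 - l) * y) := by
      intro x y
      rcases le_or_gt x 0 with hx | hx
      · have : f a x = 0 := by simp [hfdef, hgsupp x hx]
        rw [this, Real.zero_rpow hl0'.ne', zero_mul]
        exact hfnn p hppos _
      rcases le_or_gt y 0 with hy | hy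
      · have : f b y = 0 := by simp [hfdef, hgsupp y hy]
        rw [this, Real.zero_rpow (by linarith : (1:ℝ) - l ≠ 0), mul_zero]
        exact hfnn p hppos _
      -- both positive
      have hz : 0 < l * x + (1 - l) * y := by nlinarith
      have hxa : (0:ℝ) ≤ x / a := by positivity
      have hyb : (0:ℝ) ≤ y / b := by positivity
      have expand : f a x ^ l * f b y ^ (1 - l)
          = (g x ^ l * g y ^ (1 - l)) * ((x/a) ^ (a*l) * (y/b) ^ (b*(1-l))) := by
        rw [hfdef]
        simp only []
        rw [Real.mul_rpow (hgnn x) (Real.rpow_nonneg hxa _),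
          Real.mul_rpow (hgnn y) (Real.rpow_nonneg hyb _),
          ← Real.rpow_mul hxa, ← Real.rpow_mul hyb]
        ring
      have key2 : (x/a) ^ (a*l) * (y/b) ^ (b*(1-l)) ≤ ((l*x+(1-l)*y)/p) ^ p := by
        set α := a * l / p with hα
        set β := b * (1 - l) / p with hβ
        have hαpos : 0 ≤ α := div_nonneg (mul_nonneg ha.le hl0) hppos.le
        have hβpos : 0 ≤ β := div_nonneg (mul_nonneg hb.le (by linarith)) hppos.le
        have hαβ : α + β = 1 := by
          rw [hα, hβ]
          field_simp
          ring
        have amgm := Real.geom_mean_le_arith_mean2_weighted hαpos hβpos hxa hyb hαβ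
        have hcomb : α * (x/a) + β * (y/b) = (l*x+(1-l)*y)/p := by
          rw [hα, hβ]
          field_simp
        calc (x/a) ^ (a*l) * (y/b) ^ (b*(1-l))
            = ((x/a) ^ α * (y/b) ^ β) ^ p := by
              rw [Real.mul_rpow (Real.rpow_nonneg hxa _) (Real.rpow_nonneg hyb _),
                ← Real.rpow_mul hxa, ← Real.rpow_mul hyb, hα, hβ]
              rw [div_mul_cancel₀ _ hppos.ne', div_mul_cancel₀ _ hppos.ne']
          _ ≤ (α * (x/a) + β * (y/b)) ^ p :=
              Real.rpow_le_rpow (by positivity) amgm hppos.le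
          _ = ((l*x+(1-l)*y)/p) ^ p := by rw [hcomb]
      have key1 : g x ^ l * g y ^ (1 - l) ≤ g (l * x + (1 - l) * y) :=
        hlc x y hx hy l hl0 hl1
      calc f a x ^ l * f b y ^ (1 - l)
          = (g x ^ l * g y ^ (1 - l)) * ((x/a) ^ (a*l) * (y/b) ^ (b*(1-l))) := expand
        _ ≤ g (l * x + (1 - l) * y) * (((l*x+(1-l)*y)/p) ^ p) :=
            mul_le_mul key1 key2
              (mul_nonneg (Real.rpow_nonneg hxa _) (Real.rpow_nonneg hyb _))
              (hgnn _)
        _ = f p (l * x + (1 - l) * y) := rfl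
    -- case analysis on finiteness
    by_cases hIa : I a = ⊤
    · have : L a = 0 := by rw [hLrep a ha, hIa]; simp
      rw [this, Real.zero_rpow hl0'.ne', zero_mul]
      exact hLnn p hppos
    by_cases hIb : I b = ⊤
    · have : L b = 0 := by rw [hLrep b hb, hIb]; simp
      rw [this, Real.zero_rpow (by linarith : (1:ℝ) - l ≠ 0), mul_zero]
      exact hLnn p hppos
    -- interpolation: I p is finite
    have hxp : ∀ x : ℝ, 0 < x → x ^ p ≤ x ^ a + x ^ b := by
      intro x hx
      rcases le_total 1 x with hx1 | hx1
      · rcases le_total a b with hab | hab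
        · calc x ^ p ≤ x ^ b := Real.rpow_le_rpow_of_exponent_le hx1 (by nlinarith)
            _ ≤ x ^ a + x ^ b := le_add_of_nonneg_left (Real.rpow_nonneg (by linarith) _)
        · calc x ^ p ≤ x ^ a := Real.rpow_le_rpow_of_exponent_le hx1 (by nlinarith)
            _ ≤ x ^ a + x ^ b := le_add_of_nonneg_right (Real.rpow_nonneg (by linarith) _)
      · rcases le_total a b with hab | hab
        · calc x ^ p ≤ x ^ a := Real.rpow_le_rpow_of_exponent_ge hx hx1 (by nlinarith)
            _ ≤ x ^ a + x ^ b := le_add_of_nonneg_right (Real.rpow_nonneg (by linarith) _)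
        · calc x ^ p ≤ x ^ b := Real.rpow_le_rpow_of_exponent_ge hx hx1 (by nlinarith)
            _ ≤ x ^ a + x ^ b := le_add_of_nonneg_left (Real.rpow_nonneg (by linarith) _)
    set C₁ := a ^ a / p ^ p with hC₁
    set C₂ := b ^ b / p ^ p with hC₂
    have hC₁nn : 0 ≤ C₁ := by
      rw [hC₁]; positivity
    have hC₂nn : 0 ≤ C₂ := by
      rw [hC₂]; positivity
    have hinterp : ∀ x : ℝ, f p x ≤ C₁ * f a x + C₂ * f b x := by
      intro x
      rcases le_or_gt x 0 with hx | hx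
      · simp [hfdef, hgsupp x hx]
      · have h1 : f p x = g x * x ^ p / p ^ p := by
          rw [hfdef]
          simp only []
          rw [Real.div_rpow hx.le hppos.le]
          ring
        have h2 : C₁ * f a x + C₂ * f b x = g x * (x ^ a + x ^ b) / p ^ p := by
          rw [hC₁, hC₂, hfdef]
          simp only []
          rw [Real.div_rpow hx.le ha.le, Real.div_rpow hx.le hb.le]
          have hane : a ^ a ≠ 0 := (Real.rpow_pos_of_pos ha a).ne'
          have hbne : b ^ b ≠ 0 := (Real.rpow_pos_of_pos hb b).ne'
          have hpne : p ^ p ≠ 0 := (Real.rpow_pos_of_pos hppos p).ne'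
          field_simp
        rw [h1, h2]
        gcongr
        · exact hgnn x
        · exact hxp x hx
    have hIpfin : I p ≠ ⊤ := by
      have hmono : I p ≤ ENNReal.ofReal C₁ * I a + ENNReal.ofReal C₂ * I b := by
        rw [hIdef]
        simp only []
        calc ∫⁻ x, ENNReal.ofReal (f p x)
            ≤ ∫⁻ x, (ENNReal.ofReal (C₁ * f a x) + ENNReal.ofReal (C₂ * f b x)) := by
              apply lintegral_mono
              intro x
              calc ENNReal.ofReal (f p x) ≤ ENNReal.ofReal (C₁ * f a x + C₂ * f b x) :=
                    ENNReal.ofReal_le_ofReal (hinterp x)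
                _ ≤ _ := ENNReal.ofReal_add_le
          _ = (∫⁻ x, ENNReal.ofReal (C₁ * f a x)) + ∫⁻ x, ENNReal.ofReal (C₂ * f b x) :=
              lintegral_add_left (((hfm a).const_mul C₁).ennreal_ofReal) _
          _ = ENNReal.ofReal C₁ * (∫⁻ x, ENNReal.ofReal (f a x))
              + ENNReal.ofReal C₂ * ∫⁻ x, ENNReal.ofReal (f b x) := by
              congr 1
              · rw [← lintegral_const_mul _ (hfm a).ennreal_ofReal]
                apply lintegral_congr
                intro x
                rw [ENNReal.ofReal_mul hC₁nn]
              · rw [← lintegral_const_mul _ (hfm b).ennreal_ofReal]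
                apply lintegral_congr
                intro x
                rw [ENNReal.ofReal_mul hC₂nn]
      intro htop
      rw [htop] at hmono
      have : ENNReal.ofReal C₁ * I a + ENNReal.ofReal C₂ * I b ≠ ⊤ :=
        ENNReal.add_ne_top.2 ⟨ENNReal.mul_ne_top ENNReal.ofReal_ne_top hIa,
          ENNReal.mul_ne_top ENNReal.ofReal_ne_top hIb⟩
      exact this (top_le_iff.1 hmono)
    -- apply Prékopa–Leindler
    have hPL : (I a) ^ l * (I b) ^ (1 - l) ≤ I p :=
      pl_general hl0' hl1' (hfm a) (hfm b) (hfm p) (hfnn a ha) (hfnn b hb) (hfnn p hppos) hpoint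
    rw [hLrep a ha, hLrep b hb, hLrep p hppos]
    calc (I a).toReal ^ l * (I b).toReal ^ (1 - l)
        = ((I a) ^ l * (I b) ^ (1 - l)).toReal := by
          rw [ENNReal.toReal_mul, ENNReal.toReal_rpow, ENNReal.toReal_rpow]
      _ ≤ (I p).toReal := ENNReal.toReal_mono hIpfin hPL
  constructor
  · exact main
  · intro a b c hc hcb hba
    have hb : 0 < b := lt_of_lt_of_le hc hcb
    have ha : 0 < a := lt_of_lt_of_le hb hba
    rcases eq_or_lt_of_le (hcb.trans hba) with hac | hac
    · have hab : b = a := le_antisymm hba (hac ▸ hcb)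
      have hcb' : c = b := by
        apply le_antisymm hcb
        rw [hab]; rw [← hac]
      subst hab; subst hcb'
      simp
    · set l := (b - c) / (a - c) with hl
      have hane : (0:ℝ) < a - c := by linarith
      have hl0 : 0 ≤ l := div_nonneg (by linarith) hane.le
      have hl1 : l ≤ 1 := by
        rw [hl, div_le_one hane]; linarith
      have hcomb : l * a + (1 - l) * c = b := by
        rw [hl]; field_simp; ring
      have hmain := main a c l ha hc hl0 hl1
      rw [hcomb] at hmain
      have hpow := Real.rpow_le_rpow
        (mul_nonneg (Real.rpow_nonneg (hLnn a ha) _) (Real.rpow_nonneg (hLnn c hc) _))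
        hmain hane.le
      have he1 : l * (a - c) = b - c := by
        rw [hl]; field_simp
      have he2 : (1 - l) * (a - c) = a - b := by
        rw [hl]; field_simp; ring
      calc L a ^ (b - c) * L c ^ (a - b)
          = L a ^ (l * (a - c)) * L c ^ ((1 - l) * (a - c)) := by rw [he1, he2]
        _ = (L a ^ l) ^ (a - c) * (L c ^ (1 - l)) ^ (a - c) := by
            rw [Real.rpow_mul (hLnn a ha), Real.rpow_mul (hLnn c hc)]
        _ = (L a ^ l * L c ^ (1 - l)) ^ (a - c) :=
            (Real.mul_rpow (Real.rpow_nonneg (hLnn a ha) _)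
              (Real.rpow_nonneg (hLnn c hc) _)).symm
        _ ≤ L b ^ (a - c) := hpow
end

section
/- Let ξ be a positive random variable whose distribution is log-concave of order p for some real p ≥ 1, i.e., ξ has density f(x) = x^{p−1}·g(x) on (0,∞) with g log-concave on (0,∞). Then Var(log ξ) ≤ ψ₁(p), where ψ₁(p) = (d²/dp²) log Γ(p) is the trigamma function. Moreover, equality is attained when ξ has the Gamma distribution with shape parameter p (density x^{p−1}e^{−x}/Γ(p) on (0,∞)). -/
open MeasureTheory ProbabilityTheory

section Infra

open MeasureTheory Real Set Filter Asymptotics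
open scoped Topology ENNReal NNReal

noncomputable section


/-- real integral: `∫ t^(q-1) (log t)^k e^{-t}` -/
def Lam (k : ℕ) (q : ℝ) : ℝ := ∫ t in Ioi (0:ℝ), t ^ (q - 1) * (Real.log t ^ k * Real.exp (-t))

def cf (k : ℕ) : ℝ → ℂ := fun t => (Real.log t ^ k * Real.exp (-t) : ℝ)

lemma cf_succ (k : ℕ) : cf (k+1) = fun t => Real.log t • cf k t := by
  funext t
  simp [cf, Complex.ofReal_mul, pow_succ]
  push_cast
  ring

lemma cf_cont (k : ℕ) : ContinuousOn (cf k) (Ioi (0:ℝ)) := by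
  unfold cf
  apply Complex.continuous_ofReal.comp_continuousOn
  apply ContinuousOn.mul
  · exact (Real.continuousOn_log.mono (fun x hx => ne_of_gt hx)).pow k
  · exact (Real.continuous_exp.comp continuous_neg).continuousOn

lemma cf_locInt (k : ℕ) : LocallyIntegrableOn (cf k) (Ioi (0:ℝ)) :=
  (cf_cont k).locallyIntegrableOn measurableSet_Ioi

lemma cf_top (k : ℕ) : ∀ a : ℝ, (cf k) =O[atTop] (· ^ (-a)) := by
  induction k with
  | zero =>
    intro a
    have h : (fun t : ℝ => Real.exp (-t)) =O[atTop] (· ^ (-a)) := by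
      simpa only [neg_one_mul] using (isLittleO_exp_neg_mul_rpow_atTop zero_lt_one _).isBigO
    rw [← isBigO_norm_left]
    simpa only [cf, pow_zero, one_mul, Complex.norm_real, Real.norm_eq_abs, Real.abs_exp] using h
  | succ k ih =>
    intro a
    rw [cf_succ]
    exact isBigO_rpow_top_log_smul (lt_add_one a) (ih (a+1))

lemma cf_bot (k : ℕ) : ∀ b : ℝ, 0 < b → (cf k) =O[𝓝[>] (0:ℝ)] (· ^ (-b)) := by
  induction k with
  | zero =>
    intro b hb
    apply IsBigO.of_bound 1
    filter_upwards [Ioo_mem_nhdsGT_of_mem (Set.left_mem_Ico.mpr zero_lt_one)] with t ht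
    have h1 : ‖cf 0 t‖ ≤ 1 := by
      simp only [cf, pow_zero, one_mul, Complex.norm_real, Real.norm_eq_abs,
        abs_of_pos (Real.exp_pos _)]
      simpa using Real.exp_le_exp.mpr (neg_nonpos.mpr ht.1.le)
    have h2 : (1:ℝ) ≤ t ^ (-b) :=
      Real.one_le_rpow_of_pos_of_le_one_of_nonpos ht.1 ht.2.le (neg_nonpos.mpr hb.le)
    calc ‖cf 0 t‖ ≤ 1 := h1
    _ ≤ t ^ (-b) := h2
    _ ≤ 1 * ‖t ^ (-b)‖ := by
        rw [one_mul, Real.norm_eq_abs]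
        exact le_abs_self _
  | succ k ih =>
    intro b hb
    rw [cf_succ]
    exact isBigO_rpow_zero_log_smul (half_lt_self hb) (ih (b/2) (half_pos hb))

lemma mellin_cf_hasDeriv (k : ℕ) {s : ℂ} (hs : 0 < s.re) :
    HasDerivAt (mellin (cf k)) (mellin (cf (k+1)) s) s := by
  rw [cf_succ]
  exact (mellin_hasDerivAt_of_isBigO_rpow (cf_locInt k) (cf_top k (s.re+1)) (lt_add_one _)
    (cf_bot k _ (half_pos hs)) (half_lt_self hs)).2

lemma mellin_cf_ofReal (k : ℕ) {q : ℝ} (hq : 0 < q) :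
    mellin (cf k) (q : ℂ) = (Lam k q : ℂ) := by
  rw [mellin, Lam]
  rw [show ∫ t in Ioi (0:ℝ), (t:ℂ) ^ ((q:ℂ) - 1) • cf k t
      = ∫ t in Ioi (0:ℝ), ((t ^ (q - 1) * (Real.log t ^ k * Real.exp (-t)) : ℝ) : ℂ) from ?_]
  · rw [show (fun t : ℝ => ((t ^ (q - 1) * (Real.log t ^ k * Real.exp (-t)) : ℝ) : ℂ))
        = (fun t : ℝ => (RCLike.ofReal (K := ℂ) (t ^ (q - 1) * (Real.log t ^ k * Real.exp (-t)))))
        from rfl, _root_.integral_ofReal]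
    rfl
  · refine setIntegral_congr_fun measurableSet_Ioi fun t ht => ?_
    have h1 : ((t : ℂ)) ^ ((q:ℂ) - 1) = ((t ^ (q-1) : ℝ) : ℂ) := by
      rw [Complex.ofReal_cpow (le_of_lt ht)]
      norm_num
    rw [h1, cf]
    rw [smul_eq_mul, ← Complex.ofReal_mul]

lemma hasDerivAt_Lam (k : ℕ) {q : ℝ} (hq : 0 < q) :
    HasDerivAt (Lam k) (Lam (k+1) q) q := by
  have h := (mellin_cf_hasDeriv k (s := (q:ℂ)) (by simpa using hq)).real_of_complex
  rw [mellin_cf_ofReal (k+1) hq, Complex.ofReal_re] at h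
  apply h.congr_of_eventuallyEq
  have : Ioi (0:ℝ) ∈ 𝓝 q := Ioi_mem_nhds hq
  filter_upwards [this] with x hx
  rw [mellin_cf_ofReal k hx, Complex.ofReal_re]

lemma Gamma_eq_Lam {q : ℝ} (hq : 0 < q) : Real.Gamma q = Lam 0 q := by
  rw [Real.Gamma_eq_integral hq, Lam]
  congr 1; funext t; ring

lemma hasDerivAt_Gamma' {q : ℝ} (hq : 0 < q) :
    HasDerivAt Real.Gamma (Lam 1 q) q := by
  apply (hasDerivAt_Lam 0 hq).congr_of_eventuallyEq
  filter_upwards [Ioi_mem_nhds hq] with x hx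
  exact Gamma_eq_Lam hx

lemma iteratedDeriv_two_logGamma {p : ℝ} (hp : 0 < p) :
    iteratedDeriv 2 (fun q => Real.log (Real.Gamma q)) p
      = (Lam 2 p * Real.Gamma p - Lam 1 p ^ 2) / Real.Gamma p ^ 2 := by
  have hne : ∀ q : ℝ, 0 < q → Real.Gamma q ≠ 0 := fun q hq => (Real.Gamma_pos_of_pos hq).ne'
  have hd1 : ∀ q : ℝ, 0 < q → HasDerivAt (fun q => Real.log (Real.Gamma q))
      (Lam 1 q / Real.Gamma q) q := by
    intro q hq
    exact (hasDerivAt_Gamma' hq).log (hne q hq)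
  have hd2 : HasDerivAt (fun q => Lam 1 q / Real.Gamma q)
      ((Lam 2 p * Real.Gamma p - Lam 1 p * Lam 1 p) / Real.Gamma p ^ 2) p := by
    exact (hasDerivAt_Lam 1 hp).div (hasDerivAt_Gamma' hp) (hne p hp)
  rw [iteratedDeriv_succ, iteratedDeriv_one]
  have : deriv (fun q => Real.log (Real.Gamma q)) =ᶠ[𝓝 p] fun q => Lam 1 q / Real.Gamma q := by
    filter_upwards [Ioi_mem_nhds hp] with x hx
    exact (hd1 x hx).deriv
  rw [Filter.EventuallyEq.deriv_eq this, hd2.deriv]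
  ring_nf

lemma Lam_integrable (k : ℕ) {q : ℝ} (hq : 0 < q) :
    IntegrableOn (fun t => t ^ (q - 1) * (Real.log t ^ k * Real.exp (-t))) (Ioi (0:ℝ)) := by
  have hmc : MellinConvergent (cf k) (q : ℂ) :=
    mellinConvergent_of_isBigO_rpow (cf_locInt k) (cf_top k (q+1)) (by simpa using lt_add_one q)
      (cf_bot k (q/2) (half_pos hq)) (by simpa using half_lt_self hq)
  have h2 := hmc.re
  refine (IntegrableOn.congr_fun h2 (fun t ht => ?_) measurableSet_Ioi)
  have h1 : ((t : ℂ)) ^ ((q:ℂ) - 1) = ((t ^ (q-1) : ℝ) : ℂ) := by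
    rw [Complex.ofReal_cpow (le_of_lt ht)]; norm_num
  rw [h1, smul_eq_mul]
  have hcf : cf k t = ((Real.log t ^ k * Real.exp (-t) : ℝ) : ℂ) := rfl
  rw [hcf, ← Complex.ofReal_mul]
  exact RCLike.ofReal_re _

lemma wd_fun_eq {d : ℝ → ℝ} (hdnn : ∀ x, 0 ≤ d x) (h : ℝ → ℝ) :
    (fun x => (d x).toNNReal • h x) = fun x => d x * h x := by
  funext x
  simp [NNReal.smul_def, Real.coe_toNNReal _ (hdnn x)]

lemma wd_integral {d : ℝ → ℝ} (hd : Measurable d) (hdnn : ∀ x, 0 ≤ d x) (h : ℝ → ℝ) :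
    ∫ x, h x ∂(volume.withDensity fun x => ENNReal.ofReal (d x)) = ∫ x, d x * h x := by
  have h1 : (fun x => ENNReal.ofReal (d x)) = (fun x => ((d x).toNNReal : ℝ≥0∞)) := rfl
  rw [h1, integral_withDensity_eq_integral_smul hd.real_toNNReal h, wd_fun_eq hdnn]

lemma wd_integrable_iff {d : ℝ → ℝ} (hd : Measurable d) (hdnn : ∀ x, 0 ≤ d x) (h : ℝ → ℝ) :
    Integrable h (volume.withDensity fun x => ENNReal.ofReal (d x)) ↔
      Integrable (fun x => d x * h x) volume := by
  have h1 : (fun x => ENNReal.ofReal (d x)) = (fun x => ((d x).toNNReal : ℝ≥0∞)) := rfl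
  rw [h1, integrable_withDensity_iff_integrable_smul hd.real_toNNReal, wd_fun_eq hdnn]

/-- scaled Gamma density -/
def gamd (p τ : ℝ) : ℝ → ℝ := fun x =>
  if 0 < x then x ^ (p - 1) * (Real.exp (-(x/τ)) / (τ ^ p * Real.Gamma p)) else 0

lemma gamd_meas (p τ : ℝ) : Measurable (gamd p τ) := by
  unfold gamd
  refine Measurable.ite measurableSet_Ioi ?_ measurable_const
  exact (measurable_id.pow_const (p-1)).mul (((measurable_id.div_const τ).neg.exp).div_const _)

lemma gamd_nonneg {p τ : ℝ} (hp : 0 < p) (hτ : 0 < τ) (x : ℝ) : 0 ≤ gamd p τ x := by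
  unfold gamd
  split_ifs with h
  · have h1 : (0:ℝ) < τ ^ p * Real.Gamma p :=
      mul_pos (Real.rpow_pos_of_pos hτ p) (Real.Gamma_pos_of_pos hp)
    positivity
  · exact le_refl _

def LamS (p τ : ℝ) (k : ℕ) : ℝ :=
  ∑ j ∈ Finset.range (k+1), (k.choose j : ℝ) * Real.log τ ^ j * Lam (k - j) p

lemma gam_core {p τ : ℝ} (hp : 0 < p) (hτ : 0 < τ) (k : ℕ) :
    IntegrableOn (fun x => Real.log x ^ k * (x ^ (p-1) * Real.exp (-(x/τ)))) (Ioi (0:ℝ)) ∧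
    ∫ x in Ioi (0:ℝ), Real.log x ^ k * (x ^ (p-1) * Real.exp (-(x/τ))) = τ ^ p * LamS p τ k := by
  set G := fun x : ℝ => Real.log x ^ k * (x ^ (p-1) * Real.exp (-(x/τ))) with hG
  set H := fun y : ℝ => ∑ j ∈ Finset.range (k+1),
      ((k.choose j : ℝ) * Real.log τ ^ j * τ ^ (p-1)) *
        (y ^ (p-1) * (Real.log y ^ (k - j) * Real.exp (-y))) with hH
  have hGH : ∀ y ∈ Ioi (0:ℝ), G (τ * y) = H y := by
    intro y hy
    have hy' : (0:ℝ) < y := hy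
    simp only [hG, hH]
    rw [Real.log_mul hτ.ne' hy'.ne', Real.mul_rpow hτ.le hy'.le,
      mul_div_cancel_left₀ y hτ.ne', add_pow, Finset.sum_mul]
    apply Finset.sum_congr rfl
    intro j hj
    ring
  have hHint : IntegrableOn H (Ioi (0:ℝ)) := by
    apply integrable_finset_sum
    intro j hj
    exact (Lam_integrable (k - j) hp).const_mul _
  have hHval : ∫ y in Ioi (0:ℝ), H y = τ ^ (p-1) * LamS p τ k := by
    rw [hH, integral_finset_sum _ (fun j hj => (Lam_integrable (k - j) hp).const_mul _), LamS,
      Finset.mul_sum]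
    apply Finset.sum_congr rfl
    intro j hj
    rw [Lam, ← integral_const_mul, ← integral_const_mul]
    apply setIntegral_congr_fun measurableSet_Ioi
    intro y hy
    ring
  have key := integrableOn_Ioi_comp_mul_left_iff G 0 hτ
  rw [mul_zero] at key
  constructor
  · rw [← key]
    exact (hHint.congr_fun (fun y hy => (hGH y hy).symm) measurableSet_Ioi)
  · have hsub := integral_comp_mul_left_Ioi G 0 hτ
    rw [mul_zero] at hsub
    have h1 : ∫ x in Ioi (0:ℝ), G (τ * x) = ∫ y in Ioi (0:ℝ), H y :=
      setIntegral_congr_fun measurableSet_Ioi hGH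
    rw [h1, hHval, smul_eq_mul] at hsub
    have hpow : τ * τ ^ (p-1) = τ ^ p := by
      have h3 := Real.rpow_add hτ 1 (p-1)
      rw [Real.rpow_one] at h3
      rw [← h3]
      norm_num
    have h2 : ∫ x in Ioi (0:ℝ), G x = τ * (τ ^ (p-1) * LamS p τ k) := by
      rw [hsub]; field_simp
    rw [h2, ← mul_assoc, hpow]

lemma gamd_lintegral {p τ : ℝ} (hp : 0 < p) (hτ : 0 < τ) :
    ∫⁻ x, ENNReal.ofReal (gamd p τ x) = 1 := by
  have h0 : ∀ᵐ (x : ℝ), x ≠ 0 := by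
    rw [ae_iff]
    simpa using measure_singleton (0:ℝ)
  have hcongr : (fun x => ENNReal.ofReal (gamd p τ x)) =ᵐ[volume]
      ProbabilityTheory.gammaPDF p τ⁻¹ := by
    filter_upwards [h0] with x hx
    rcases lt_trichotomy x 0 with h | h | h
    · rw [ProbabilityTheory.gammaPDF_of_neg h]
      simp [gamd, not_lt.mpr h.le, h.not_gt]
    · exact absurd h hx
    · rw [ProbabilityTheory.gammaPDF_of_nonneg h.le]
      congr 1
      simp only [gamd, if_pos h]
      rw [Real.inv_rpow hτ.le]
      field_simp
  rw [lintegral_congr_ae hcongr]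
  exact ProbabilityTheory.lintegral_gammaPDF_eq_one hp (inv_pos.mpr hτ)

lemma gamd_isProb {p τ : ℝ} (hp : 0 < p) (hτ : 0 < τ) :
    IsProbabilityMeasure (volume.withDensity fun x => ENNReal.ofReal (gamd p τ x)) :=
  ⟨by rw [withDensity_apply _ MeasurableSet.univ, setLIntegral_univ, gamd_lintegral hp hτ]⟩

lemma gamd_mom {p τ : ℝ} (hp : 0 < p) (hτ : 0 < τ) (k : ℕ) :
    Integrable (fun x => Real.log x ^ k * gamd p τ x) volume ∧
    ∫ x, Real.log x ^ k * gamd p τ x = LamS p τ k / Real.Gamma p := by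
  have hfun : (fun x => Real.log x ^ k * gamd p τ x)
      = (Ioi (0:ℝ)).indicator
        (fun x => (Real.log x ^ k * (x ^ (p-1) * Real.exp (-(x/τ)))) / (τ ^ p * Real.Gamma p)) := by
    funext x
    simp only [Set.indicator, gamd, mem_Ioi]
    split_ifs with h
    · ring
    · simp
  have hτp : τ ^ p * Real.Gamma p ≠ 0 :=
    (mul_pos (Real.rpow_pos_of_pos hτ p) (Real.Gamma_pos_of_pos hp)).ne'
  constructor
  · rw [hfun, integrable_indicator_iff measurableSet_Ioi]
    exact ((gam_core hp hτ k).1.div_const _)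
  · rw [hfun, integral_indicator measurableSet_Ioi, integral_div, (gam_core hp hτ k).2]
    field_simp

lemma LamS_zero {p τ : ℝ} (hp : 0 < p) : LamS p τ 0 = Real.Gamma p := by
  simp [LamS, ← Gamma_eq_Lam hp]

lemma LamS_one {p τ : ℝ} (hp : 0 < p) :
    LamS p τ 1 = Lam 1 p + Real.log τ * Real.Gamma p := by
  rw [LamS]
  rw [Finset.sum_range_succ, Finset.sum_range_succ, Finset.sum_range_zero]
  simp [← Gamma_eq_Lam hp]

lemma LamS_two {p τ : ℝ} (hp : 0 < p) :
    LamS p τ 2 = Lam 2 p + 2 * Real.log τ * Lam 1 p + Real.log τ ^ 2 * Real.Gamma p := by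
  rw [LamS]
  rw [Finset.sum_range_succ, Finset.sum_range_succ, Finset.sum_range_succ, Finset.sum_range_zero]
  simp [← Gamma_eq_Lam hp]

lemma dens_facts {f : ℝ → ℝ} (hfm : Measurable f) (hfnn : ∀ x, 0 ≤ f x)
    (hl : ∫⁻ x, ENNReal.ofReal (f x) = 1) :
    Integrable f volume ∧ ∫ x, f x = 1 := by
  have hae : 0 ≤ᵐ[volume] f := Eventually.of_forall hfnn
  have hint : Integrable f volume := by
    refine ⟨hfm.aestronglyMeasurable, ?_⟩
    rw [hasFiniteIntegral_iff_ofReal hae, hl]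
    exact ENNReal.one_lt_top
  refine ⟨hint, ?_⟩
  rw [integral_eq_lintegral_of_nonneg_ae hae hfm.aestronglyMeasurable, hl]
  simp

section Sign

variable {D : ℝ → ℝ}

/-- Degenerate case: a linear-in-log function whose product with `D` is nonneg forces `D = 0`
a.e., hence the quadratic integral vanishes. -/
lemma deg_helper (hDi : Integrable D volume) (hDli : Integrable (fun x => Real.log x * D x) volume)
    (hD : ∫ x, D x = 0) (hDl : ∫ x, Real.log x * D x = 0) (α β : ℝ)
    (hpos : ∀ x, 0 ≤ (α + β * Real.log x) * D x)
    (hnull : volume {x : ℝ | α + β * Real.log x = 0 ∧ D x ≠ 0} = 0) :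
    ∫ x, Real.log x ^ 2 * D x ≤ 0 := by
  have hint : Integrable (fun x => (α + β * Real.log x) * D x) volume := by
    have : (fun x => (α + β * Real.log x) * D x)
        = fun x => α * D x + β * (Real.log x * D x) := by funext x; ring
    rw [this]
    exact (hDi.const_mul α).add (hDli.const_mul β)
  have hval : ∫ x, (α + β * Real.log x) * D x = 0 := by
    have : (fun x => (α + β * Real.log x) * D x)
        = fun x => α * D x + β * (Real.log x * D x) := by funext x; ring
    rw [this, integral_add (hDi.const_mul α) (hDli.const_mul β),
      integral_const_mul, integral_const_mul, hD, hDl]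
    ring
  have hz : (fun x => (α + β * Real.log x) * D x) =ᵐ[volume] 0 :=
    (integral_eq_zero_iff_of_nonneg hpos hint).mp hval
  have hDz : D =ᵐ[volume] 0 := by
    have hnull' : ∀ᵐ (x:ℝ), ¬(α + β * Real.log x = 0 ∧ D x ≠ 0) := by
      rw [ae_iff]
      simpa using hnull
    filter_upwards [hz, hnull'] with x h1 h2
    by_contra hDx
    have hfac : α + β * Real.log x ≠ 0 := fun h => h2 ⟨h, hDx⟩
    have := mul_eq_zero.mp h1
    tauto
  have : ∫ x, Real.log x ^ 2 * D x = 0 := by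
    rw [integral_congr_ae (g := fun _ => (0:ℝ)) ?_, integral_zero]
    filter_upwards [hDz] with x hx
    simp only [Pi.zero_apply] at hx
    rw [hx, mul_zero]
  rw [this]

lemma null_log_eq (c : ℝ) (hc : 0 < c) : volume {x : ℝ | Real.log x = Real.log c} = 0 := by
  have hsub : {x : ℝ | Real.log x = Real.log c} ⊆ ({c, -c, 0} : Set ℝ) := by
    intro x hx
    simp only [mem_setOf_eq] at hx
    rcases lt_trichotomy x 0 with h | h | h
    · have hx' : Real.log (-x) = Real.log c := by rwa [Real.log_neg_eq_log]
      have : -x = c := Real.log_injOn_pos (by simpa using h) (by simpa using hc) hx'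
      right; left; simp [← this]
    · right; right; simp [h]
    · left
      exact Real.log_injOn_pos (by simpa using h) (by simpa using hc) hx
  refine measure_mono_null hsub ?_
  have hc2 : ({c, -c, 0} : Set ℝ).Countable :=
    (Set.countable_singleton (0:ℝ)).insert (-c) |>.insert c
  exact hc2.measure_zero volume

lemma sign_lemma (hD0 : ∀ x, x ≤ 0 → D x = 0)
    (hDi : Integrable D volume) (hDli : Integrable (fun x => Real.log x * D x) volume)
    (hDqi : Integrable (fun x => Real.log x ^ 2 * D x) volume)
    (hD : ∫ x, D x = 0) (hDl : ∫ x, Real.log x * D x = 0)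
    (T : Set ℝ) (hTpos : T ⊆ Ioi 0)
    (hTconv : ∀ x ∈ T, ∀ y ∈ T, ∀ z, x ≤ z → z ≤ y → z ∈ T)
    (hsgn : ∀ x, 0 < x → (x ∈ T → 0 ≤ D x) ∧ (x ∉ T → D x ≤ 0)) :
    ∫ x, Real.log x ^ 2 * D x ≤ 0 := by
  by_cases hne : T.Nonempty
  · have hbb : BddBelow T := ⟨0, fun t ht => (hTpos ht).le⟩
    set a := sInf T with ha
    have ha0 : 0 ≤ a := le_csInf hne (fun t ht => (hTpos ht).le)
    have hin : ∀ x, a < x → x < sSup T ∨ ¬BddAbove T → x ∈ T := by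
      intro x h1 h2
      obtain ⟨t1, ht1, h3⟩ := exists_lt_of_csInf_lt hne h1
      rcases h2 with h2 | h2
      · obtain ⟨t2, ht2, h4⟩ := exists_lt_of_lt_csSup hne h2
        exact hTconv t1 ht1 t2 ht2 x h3.le h4.le
      · obtain ⟨t2, ht2, h4⟩ := not_bddAbove_iff.mp h2 x
        exact hTconv t1 ht1 t2 ht2 x h3.le h4.le
    have hlow : ∀ x, 0 < x → x < a → D x ≤ 0 := by
      intro x hx hxa
      refine (hsgn x hx).2 (fun hxT => ?_)
      exact absurd (csInf_le hbb hxT) (not_le.mpr hxa)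
    by_cases hbd : BddAbove T
    · set b := sSup T with hb
      have hhigh : ∀ x, 0 < x → b < x → D x ≤ 0 := by
        intro x hx hbx
        refine (hsgn x hx).2 (fun hxT => ?_)
        exact absurd (le_csSup hbd hxT) (not_le.mpr hbx)
      by_cases ha : 0 < a
      · -- main quadratic case
        have hb0 : 0 < b := lt_of_lt_of_le ha (csInf_le_csSup hne hbb hbd)
        have hab : Real.log a ≤ Real.log b :=
          Real.log_le_log ha (csInf_le_csSup hne hbb hbd)
        set la := Real.log a
        set lb := Real.log b
        have hq : ∀ x, (Real.log x - la) * (Real.log x - lb) * D x ≤ 0 := by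
          intro x
          rcases le_or_gt x 0 with hx | hx
          · rw [hD0 x hx, mul_zero]
          rcases lt_trichotomy x a with hxa | hxa | hxa
          · have h1 : Real.log x < la := Real.log_lt_log hx hxa
            have h2 : D x ≤ 0 := hlow x hx hxa
            exact mul_nonpos_of_nonneg_of_nonpos
              (le_of_lt (mul_pos_of_neg_of_neg (by linarith) (by linarith))) h2
          · simp [hxa, la]
          rcases lt_trichotomy x b with hxb | hxb | hxb
          · have hxT : x ∈ T := hin x hxa (Or.inl hxb)
            have h1 : la ≤ Real.log x := Real.log_le_log ha hxa.le
            have h2 : Real.log x ≤ lb := Real.log_le_log hx hxb.le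
            have h3 : 0 ≤ D x := (hsgn x hx).1 hxT
            exact mul_nonpos_iff.mpr (Or.inr ⟨mul_nonpos_iff.mpr (Or.inl ⟨by linarith, by linarith⟩), h3⟩)
          · simp [hxb, lb]
          · have h1 : lb < Real.log x := Real.log_lt_log hb0 hxb
            have h2 : D x ≤ 0 := hhigh x hx hxb
            exact mul_nonpos_iff.mpr (Or.inl ⟨le_of_lt (mul_pos (by linarith) (by linarith)), h2⟩)
        -- expand
        have e1 : Integrable (fun x => Real.log x ^ 2 * D x + (-(la + lb)) * (Real.log x * D x)) volume := by
          exact hDqi.add (hDli.const_mul _)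
        have heq : (fun x => (Real.log x - la) * (Real.log x - lb) * D x)
            = fun x => (Real.log x ^ 2 * D x + (-(la + lb)) * (Real.log x * D x)) + (la * lb) * D x := by
          funext x; ring
        have hqint : Integrable (fun x => (Real.log x - la) * (Real.log x - lb) * D x) volume := by
          rw [heq]
          exact e1.add (hDi.const_mul _)
        have hqval : ∫ x, (Real.log x - la) * (Real.log x - lb) * D x
            = ∫ x, Real.log x ^ 2 * D x := by
          rw [heq, integral_add e1 (hDi.const_mul _), integral_add hDqi (hDli.const_mul _),
            integral_const_mul, integral_const_mul, hD, hDl]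
          ring
        rw [← hqval]
        exact integral_nonpos hq
      · -- a = 0 : single crossing at b
        have ha' : a = 0 := le_antisymm (not_lt.mp ha) ha0
        obtain ⟨t0, ht0⟩ := hne
        have hb0 : 0 < b := lt_of_lt_of_le (hTpos ht0) (le_csSup hbd ht0)
        apply deg_helper hDi hDli hD hDl (Real.log b) (-1)
        · intro x
          rcases le_or_gt x 0 with hx | hx
          · rw [hD0 x hx, mul_zero]
          rcases lt_trichotomy x b with hxb | hxb | hxb
          · have h1 : Real.log x < Real.log b := Real.log_lt_log hx hxb
            have h2 : 0 ≤ D x := (hsgn x hx).1 (hin x (ha' ▸ hx) (Or.inl hxb))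
            exact mul_nonneg (by linarith) h2
          · simp [hxb]
          · have h1 : Real.log b < Real.log x := Real.log_lt_log hb0 hxb
            have h2 : D x ≤ 0 := hhigh x hx hxb
            rw [← neg_mul_neg]
            exact mul_nonneg (by linarith) (by linarith)
        · refine measure_mono_null (fun x hx => ?_) (null_log_eq b hb0)
          have := hx.1
          simp only [mem_setOf_eq]
          linarith
    · -- unbounded above
      by_cases ha : 0 < a
      · apply deg_helper hDi hDli hD hDl (-(Real.log a)) 1
        · intro x
          rcases le_or_gt x 0 with hx | hx
          · rw [hD0 x hx, mul_zero]
          rcases lt_trichotomy x a with hxa | hxa | hxa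
          · have h1 : Real.log x < Real.log a := Real.log_lt_log hx hxa
            have h2 : D x ≤ 0 := hlow x hx hxa
            rw [← neg_mul_neg]
            exact mul_nonneg (by linarith) (by linarith)
          · simp [hxa]
          · have h1 : Real.log a < Real.log x := Real.log_lt_log ha hxa
            have h2 : 0 ≤ D x := (hsgn x hx).1 (hin x hxa (Or.inr hbd))
            exact mul_nonneg (by linarith) h2
        · refine measure_mono_null (fun x hx => ?_) (null_log_eq a ha)
          have := hx.1
          simp only [mem_setOf_eq]
          linarith
      · -- a = 0, unbounded: D ≥ 0 on positives
        have ha' : a = 0 := le_antisymm (not_lt.mp ha) ha0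
        apply deg_helper hDi hDli hD hDl 1 0
        · intro x
          rcases le_or_gt x 0 with hx | hx
          · rw [hD0 x hx, mul_zero]
          · have h2 : 0 ≤ D x := (hsgn x hx).1 (hin x (ha' ▸ hx) (Or.inr hbd))
            have heq : (1 + 0 * Real.log x) * D x = D x := by ring
            rw [heq]
            exact h2
        · have hset : {x : ℝ | (1:ℝ) + 0 * Real.log x = 0 ∧ D x ≠ 0} = ∅ := by
            ext x; norm_num
          rw [hset]
          exact measure_empty
  · -- T empty : D ≤ 0 everywhere
    apply deg_helper hDi hDli hD hDl (-1) 0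
    · intro x
      rcases le_or_gt x 0 with hx | hx
      · rw [hD0 x hx, mul_zero]
      · have h2 : D x ≤ 0 := (hsgn x hx).2 (fun hxT => hne ⟨x, hxT⟩)
        have heq : (-1 + 0 * Real.log x) * D x = -D x := by ring
        rw [heq]
        linarith
    · have hset : {x : ℝ | (-1:ℝ) + 0 * Real.log x = 0 ∧ D x ≠ 0} = ∅ := by
        ext x; norm_num
      rw [hset]
      exact measure_empty

end Sign

lemma pow_fun_eq : (Real.log ^ 2 : ℝ → ℝ) = fun x => Real.log x ^ 2 := by
  funext x; simp

lemma gamd_memLp {p τ : ℝ} (hp : 0 < p) (hτ : 0 < τ) :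
    MemLp Real.log 2 (volume.withDensity fun x => ENNReal.ofReal (gamd p τ x)) := by
  refine (memLp_two_iff_integrable_sq Real.measurable_log.aestronglyMeasurable).mpr ?_
  rw [wd_integrable_iff (gamd_meas p τ) (gamd_nonneg hp hτ)]
  have heq : (fun x => gamd p τ x * Real.log x ^ 2) = fun x => Real.log x ^ 2 * gamd p τ x := by
    funext x; ring
  rw [heq]
  exact (gamd_mom hp hτ 2).1

lemma var_gamd {p τ : ℝ} (hp : 0 < p) (hτ : 0 < τ) :
    ProbabilityTheory.variance Real.log (volume.withDensity fun x => ENNReal.ofReal (gamd p τ x))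
      = (Lam 2 p * Real.Gamma p - Lam 1 p ^ 2) / Real.Gamma p ^ 2 := by
  haveI := gamd_isProb hp hτ
  have hΓ : 0 < Real.Gamma p := Real.Gamma_pos_of_pos hp
  rw [ProbabilityTheory.variance_eq_sub (gamd_memLp hp hτ)]
  rw [pow_fun_eq, wd_integral (gamd_meas p τ) (gamd_nonneg hp hτ),
    wd_integral (gamd_meas p τ) (gamd_nonneg hp hτ)]
  have h2 : ∫ x, gamd p τ x * Real.log x ^ 2 = LamS p τ 2 / Real.Gamma p := by
    rw [show (fun x => gamd p τ x * Real.log x ^ 2) = fun x => Real.log x ^ 2 * gamd p τ x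
      from funext fun x => by ring]
    exact (gamd_mom hp hτ 2).2
  have h1 : ∫ x, gamd p τ x * Real.log x = LamS p τ 1 / Real.Gamma p := by
    rw [show (fun x => gamd p τ x * Real.log x) = fun x => Real.log x ^ 1 * gamd p τ x
      from funext fun x => by ring]
    exact (gamd_mom hp hτ 1).2
  rw [h2, h1, LamS_two hp, LamS_one hp]
  field_simp
  ring

lemma var_transfer {Ω : Type*} [MeasureSpace Ω] {ξ : Ω → ℝ} (hξm : Measurable ξ) :
    ProbabilityTheory.variance (fun ω => Real.log (ξ ω)) (volume : Measure Ω)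
      = ProbabilityTheory.variance Real.log (Measure.map ξ (volume : Measure Ω)) := by
  unfold ProbabilityTheory.variance ProbabilityTheory.evariance
  rw [integral_map hξm.aemeasurable Real.measurable_log.aestronglyMeasurable]
  rw [lintegral_map (by measurability) hξm]

theorem core_bound {p : ℝ} (hp : 1 ≤ p) {g : ℝ → ℝ} (hgnn : ∀ x, 0 < x → 0 ≤ g x)
    (hgm : Measurable g)
    (hlc : ∀ x y : ℝ, 0 < x → 0 < y → ∀ l : ℝ, 0 ≤ l → l ≤ 1 →
      g x ^ l * g y ^ (1 - l) ≤ g (l * x + (1 - l) * y))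
    (hprob : ∫⁻ x, ENNReal.ofReal (if 0 < x then x ^ (p - 1) * g x else 0) = 1) :
    ProbabilityTheory.variance Real.log
        (volume.withDensity fun x => ENNReal.ofReal (if 0 < x then x ^ (p - 1) * g x else 0))
      ≤ (Lam 2 p * Real.Gamma p - Lam 1 p ^ 2) / Real.Gamma p ^ 2 := by
  have hp0 : 0 < p := lt_of_lt_of_le one_pos hp
  have hΓ : 0 < Real.Gamma p := Real.Gamma_pos_of_pos hp0
  set f : ℝ → ℝ := fun x => if 0 < x then x ^ (p - 1) * g x else 0 with hfdef
  have hfm : Measurable f :=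
    Measurable.ite measurableSet_Ioi ((measurable_id.pow_const (p-1)).mul hgm) measurable_const
  have hfnn : ∀ x, 0 ≤ f x := by
    intro x
    have hfx : f x = if 0 < x then x ^ (p - 1) * g x else 0 := rfl
    rw [hfx]
    split_ifs with h
    · exact mul_nonneg (Real.rpow_nonneg h.le _) (hgnn x h)
    · exact le_refl _
  set μ := volume.withDensity (fun x => ENNReal.ofReal (f x)) with hμdef
  haveI hμP : IsProbabilityMeasure μ := by
    constructor
    rw [hμdef, withDensity_apply _ MeasurableSet.univ, setLIntegral_univ, hprob]
  by_cases hmem : MemLp Real.log 2 μ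
  case neg =>
    have hv : ProbabilityTheory.variance Real.log μ = 0 := by
      rw [ProbabilityTheory.variance,
        ProbabilityTheory.evariance_eq_top Real.measurable_log.aestronglyMeasurable hmem]
      simp
    rw [hv]
    have h0 := ProbabilityTheory.variance_nonneg Real.log
      (volume.withDensity fun x => ENNReal.ofReal (gamd p 1 x))
    rwa [var_gamd hp0 one_pos] at h0
  case pos =>
    -- moments of μ
    have hint2μ : Integrable (fun x => Real.log x ^ 2) μ := by
      exact hmem.integrable_sq
    have hint1μ : Integrable Real.log μ := hmem.integrable one_le_two
    set m := ∫ x, Real.log x ∂μ with hm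
    have hfint := dens_facts hfm hfnn hprob
    have hJ1 : ∫ x, f x * Real.log x = m := by
      rw [hm, hμdef, wd_integral hfm hfnn]
    have hJ1i : Integrable (fun x => f x * Real.log x) volume := by
      have := (wd_integrable_iff hfm hfnn Real.log).mp (by rwa [← hμdef])
      exact this
    have hJ2i : Integrable (fun x => f x * Real.log x ^ 2) volume := by
      have := (wd_integrable_iff hfm hfnn (fun x => Real.log x ^ 2)).mp (by rwa [← hμdef])
      exact this
    set ψ := Lam 1 p / Real.Gamma p with hψ
    set τ := Real.exp (m - ψ) with hτdef
    have hτ : 0 < τ := Real.exp_pos _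
    have hlogτ : Real.log τ = m - ψ := Real.log_exp _
    set γ := gamd p τ with hγdef
    set c := τ ^ p * Real.Gamma p with hcdef
    have hc : 0 < c := mul_pos (Real.rpow_pos_of_pos hτ p) hΓ
    -- gamma side facts
    have hγ0i : Integrable γ volume := by
      have := (gamd_mom hp0 hτ 0).1
      simpa using this
    have hγ0 : ∫ x, γ x = 1 := by
      have := (gamd_mom hp0 hτ 0).2
      rw [LamS_zero hp0] at this
      simp only [pow_zero, one_mul] at this
      rw [hγdef, this, div_self hΓ.ne']
    have hγ1i : Integrable (fun x => Real.log x ^ 1 * γ x) volume := (gamd_mom hp0 hτ 1).1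
    have hγ1 : ∫ x, Real.log x ^ 1 * γ x = m := by
      rw [hγdef, (gamd_mom hp0 hτ 1).2, LamS_one hp0, hlogτ, hψ]
      field_simp
      ring
    have hγ2i : Integrable (fun x => Real.log x ^ 2 * γ x) volume := (gamd_mom hp0 hτ 2).1
    have hγ2 : ∫ x, Real.log x ^ 2 * γ x
        = Lam 2 p / Real.Gamma p + 2 * (m - ψ) * ψ + (m - ψ) ^ 2 := by
      rw [hγdef, (gamd_mom hp0 hτ 2).2, LamS_two hp0, hlogτ, hψ]
      field_simp
    -- the difference function
    set D := fun x => f x - γ x with hDdef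
    have hD0 : ∀ x, x ≤ 0 → D x = 0 := by
      intro x hx
      rw [hDdef]
      simp only [hfdef, hγdef, gamd, if_neg (not_lt.mpr hx)]
      ring
    have hDi : Integrable D volume := hfint.1.sub hγ0i
    have hDli : Integrable (fun x => Real.log x * D x) volume := by
      have heq : (fun x => Real.log x * D x)
          = fun x => f x * Real.log x - Real.log x ^ 1 * γ x := by
        funext x; rw [hDdef]; ring
      rw [heq]
      exact hJ1i.sub hγ1i
    have hDqi : Integrable (fun x => Real.log x ^ 2 * D x) volume := by
      have heq : (fun x => Real.log x ^ 2 * D x)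
          = fun x => f x * Real.log x ^ 2 - Real.log x ^ 2 * γ x := by
        funext x; rw [hDdef]; ring
      rw [heq]
      exact hJ2i.sub hγ2i
    have hDint : ∫ x, D x = 0 := by
      rw [hDdef]
      rw [integral_sub hfint.1 hγ0i, hfint.2, hγ0]
      ring
    have hDl : ∫ x, Real.log x * D x = 0 := by
      have heq : (fun x => Real.log x * D x)
          = fun x => f x * Real.log x - Real.log x ^ 1 * γ x := by
        funext x; rw [hDdef]; ring
      rw [heq, integral_sub hJ1i hγ1i, hJ1, hγ1]
      ring
    -- the level set
    set T := {x : ℝ | 0 < x ∧ 1 ≤ g x * (c * Real.exp (x / τ))} with hTdef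
    have hTpos : T ⊆ Ioi 0 := fun x hx => hx.1
    -- key pointwise reformulation
    have hkey : ∀ x : ℝ, 0 < x →
        (Real.exp (-(x / τ)) / c = 1 / (g x * (c * Real.exp (x / τ))) * g x ∨ True) := by
      intro x hx; exact Or.inr trivial
    have hE : ∀ x : ℝ, Real.exp (-(x/τ)) / c = 1 / (c * Real.exp (x/τ)) := by
      intro x
      rw [Real.exp_neg]
      field_simp
    have hmem_iff : ∀ x : ℝ, 0 < x → (x ∈ T ↔ Real.exp (-(x/τ)) / c ≤ g x) := by
      intro x hx
      have hcE : 0 < c * Real.exp (x/τ) := mul_pos hc (Real.exp_pos _)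
      constructor
      · intro hxT
        rw [hE x, div_le_iff₀ hcE]
        simpa [mul_comm] using hxT.2
      · intro h
        refine ⟨hx, ?_⟩
        rw [hE x, div_le_iff₀ hcE] at h
        simpa [mul_comm] using h
    have hDx : ∀ x : ℝ, 0 < x → D x = x ^ (p-1) * (g x - Real.exp (-(x/τ)) / c) := by
      intro x hx
      rw [hDdef]
      simp only [hfdef, hγdef, gamd, if_pos hx, hcdef]
      ring
    have hsgn : ∀ x, 0 < x → (x ∈ T → 0 ≤ D x) ∧ (x ∉ T → D x ≤ 0) := by
      intro x hx
      constructor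
      · intro hxT
        rw [hDx x hx]
        exact mul_nonneg (Real.rpow_nonneg hx.le _)
          (sub_nonneg.mpr ((hmem_iff x hx).mp hxT))
      · intro hxT
        rw [hDx x hx]
        have := (hmem_iff x hx).not.mp hxT
        push_neg at this
        exact mul_nonpos_of_nonneg_of_nonpos (Real.rpow_nonneg hx.le _)
          (sub_nonpos.mpr this.le)
    -- convexity of T
    have hTconv : ∀ x ∈ T, ∀ y ∈ T, ∀ z, x ≤ z → z ≤ y → z ∈ T := by
      intro x hxT y hyT z hxz hzy
      have hx : 0 < x := hxT.1
      have hy : 0 < y := hyT.1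
      have hz : 0 < z := lt_of_lt_of_le hx hxz
      rcases eq_or_lt_of_le hxz with heq | hxz'
      · exact heq ▸ hxT
      rcases eq_or_lt_of_le hzy with heq | hzy'
      · exact heq.symm ▸ hyT
      have hxy : x < y := lt_trans hxz' hzy'
      set l := (y - z) / (y - x) with hldef
      have hyx : 0 < y - x := by linarith
      have hl0 : 0 ≤ l := div_nonneg (by linarith) hyx.le
      have hl1 : l ≤ 1 := by
        rw [hldef, div_le_one hyx]
        linarith
      have hzeq : z = l * x + (1 - l) * y := by
        rw [hldef]
        field_simp
        ring
      -- the comparison function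
      set A := fun t : ℝ => Real.exp (-(t/τ) - Real.log c) with hAdef
      have hAeq : ∀ t, A t = Real.exp (-(t/τ)) / c := by
        intro t
        have e0 : A t = Real.exp (-(t/τ) - Real.log c) := rfl
        rw [e0, Real.exp_sub, Real.exp_log hc]
      have hgx : A x ≤ g x := by rw [hAeq]; exact (hmem_iff x hx).mp hxT
      have hgy : A y ≤ g y := by rw [hAeq]; exact (hmem_iff y hy).mp hyT
      have hAz : A z = A x ^ l * A y ^ (1 - l) := by
        have e1 : A x = Real.exp (-(x/τ) - Real.log c) := rfl
        have e2 : A y = Real.exp (-(y/τ) - Real.log c) := rfl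
        have e3 : A z = Real.exp (-(z/τ) - Real.log c) := rfl
        rw [e1, e2, e3, ← Real.exp_mul, ← Real.exp_mul, ← Real.exp_add]
        congr 1
        rw [hzeq]
        field_simp
        ring
      have h1 : A x ^ l ≤ g x ^ l := Real.rpow_le_rpow (Real.exp_nonneg _) hgx hl0
      have h2 : A y ^ (1-l) ≤ g y ^ (1-l) :=
        Real.rpow_le_rpow (Real.exp_nonneg _) hgy (by linarith)
      have h3 : A z ≤ g z := by
        calc A z = A x ^ l * A y ^ (1-l) := hAz
        _ ≤ g x ^ l * g y ^ (1-l) :=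
              mul_le_mul h1 h2 (Real.rpow_nonneg (Real.exp_nonneg _) _)
                (Real.rpow_nonneg (hgnn x hx) _)
        _ ≤ g (l * x + (1-l) * y) := hlc x y hx hy l hl0 hl1
        _ = g z := by rw [← hzeq]
      exact (hmem_iff z hz).mpr (by rw [← hAeq]; exact h3)
    -- apply the sign lemma
    have hmain := sign_lemma hD0 hDi hDli hDqi hDint hDl T hTpos hTconv hsgn
    -- assemble
    have hvar : ProbabilityTheory.variance Real.log μ = (∫ x, f x * Real.log x ^ 2) - m ^ 2 := by
      rw [ProbabilityTheory.variance_eq_sub hmem, pow_fun_eq]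
      rw [hμdef, wd_integral hfm hfnn, ← hm]
    have hsplit : ∫ x, f x * Real.log x ^ 2
        = (∫ x, Real.log x ^ 2 * D x) + ∫ x, Real.log x ^ 2 * γ x := by
      have heq : (fun x => f x * Real.log x ^ 2)
          = fun x => Real.log x ^ 2 * D x + Real.log x ^ 2 * γ x := by
        funext x; rw [hDdef]; ring
      rw [heq, integral_add hDqi hγ2i]
    rw [hvar, hsplit, hγ2]
    have hfinal : Lam 2 p / Real.Gamma p - ψ ^ 2
        = (Lam 2 p * Real.Gamma p - Lam 1 p ^ 2) / Real.Gamma p ^ 2 := by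
      rw [hψ]
      field_simp
    nlinarith [hmain, hfinal]


end
end Infra

theorem order_p_log_variance_trigamma
    {Ω : Type*} [MeasureSpace Ω] [IsProbabilityMeasure (ℙ : Measure Ω)]
    (ξ : Ω → ℝ) (hξm : Measurable ξ) (hξpos : ∀ ω, 0 < ξ ω)
    (p : ℝ) (hp : 1 ≤ p)
    (g : ℝ → ℝ) (hgnn : ∀ x, 0 < x → 0 ≤ g x) (hgm : Measurable g)
    (hdens : Measure.map ξ ℙ = volume.withDensity
      (fun x => ENNReal.ofReal (if 0 < x then x ^ (p - 1) * g x else 0)))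
    (hlc : ∀ x y : ℝ, 0 < x → 0 < y → ∀ l : ℝ, 0 ≤ l → l ≤ 1 →
      g x ^ l * g y ^ (1 - l) ≤ g (l * x + (1 - l) * y))
    :
    variance (fun ω => Real.log (ξ ω)) ℙ
        ≤ iteratedDeriv 2 (fun q => Real.log (Real.Gamma q)) p ∧
      ((∀ x : ℝ, 0 < x → g x = Real.exp (-x) / Real.Gamma p) →
        variance (fun ω => Real.log (ξ ω)) ℙ
          = iteratedDeriv 2 (fun q => Real.log (Real.Gamma q)) p) := by
  have hp0 : 0 < p := lt_of_lt_of_le one_pos hp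
  have htrans := var_transfer (Ω := Ω) hξm
  have hprob1 : ∫⁻ x, ENNReal.ofReal (if 0 < x then x ^ (p - 1) * g x else 0) = 1 := by
    have h1 : (Measure.map ξ ℙ) Set.univ = 1 := by
      haveI : IsProbabilityMeasure (Measure.map ξ ℙ) :=
        Measure.isProbabilityMeasure_map hξm.aemeasurable
      exact measure_univ
    rw [hdens, withDensity_apply _ MeasurableSet.univ, setLIntegral_univ] at h1
    exact h1
  have hID := iteratedDeriv_two_logGamma hp0
  constructor
  · rw [htrans, hdens, hID]
    exact core_bound hp hgnn hgm hlc hprob1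
  · intro hg
    rw [htrans, hdens, hID]
    have hfun : (fun x => ENNReal.ofReal (if 0 < x then x ^ (p - 1) * g x else 0))
        = fun x => ENNReal.ofReal (gamd p 1 x) := by
      funext x
      congr 1
      simp only [gamd]
      split_ifs with h
      · rw [hg x h]
        norm_num [Real.one_rpow]
      · rfl
    rw [hfun, var_gamd hp0 one_pos]
end
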